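/- arXiv:1612.02845 — 2 statements merged into one kernel-verified Lean document; each statement's English description precedes it below -/
import Mathlib

section
/- Let C = C(c,d) be a nonsplit Cartan subgroup of GL₂(ℤ_ℓ). Then for all integers a, b ≥ 0: μ_{a,b}(C) equals (ℓ² − 2)/(ℓ² − 1) if a = 0 and b = 0; equals ℓ^{−2a} if a > 0 and b = 0; and equals 0 if b > 0 (indeed 𝓜_{a,b}(C) is empty whenever b > 0). -/
open Matrix Polynomial

/-- Reduction modulo `p^n` on `GL₂(ℤ_p)`. -/
noncomputable def redGL (p : ℕ) [Fact p.Prime] (n : ℕ) :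
    GL (Fin 2) ℤ_[p] →* GL (Fin 2) (ZMod (p ^ n)) :=
  Matrix.GeneralLinearGroup.map (PadicInt.toZModPow n)

/-- `M ≡ I (mod p^k)`. -/
def modI {p : ℕ} [Fact p.Prime] (k : ℕ) (M : GL (Fin 2) ℤ_[p]) : Prop :=
  ∀ i j, ((p : ℤ_[p]) ^ k) ∣ (((M : Matrix (Fin 2) (Fin 2) ℤ_[p]) - 1) i j)

/-- `v_p x = k`, expressed through divisibility (in particular `x ≠ 0`). -/
def valEq {p : ℕ} [Fact p.Prime] (x : ℤ_[p]) (k : ℕ) : Prop :=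
  ((p : ℤ_[p]) ^ k ∣ x) ∧ ¬ ((p : ℤ_[p]) ^ (k + 1) ∣ x)

/-- Condition `E(a,b)`. -/
def CondE {p : ℕ} [Fact p.Prime] (a b : ℕ) (M : GL (Fin 2) ℤ_[p]) : Prop :=
  modI a M ∧ ¬ modI (a + 1) M ∧
    valEq (((M : Matrix (Fin 2) (Fin 2) ℤ_[p]) - 1).det) (2 * a + b)

/-- `𝓜_{a,b}(G)`. -/
def Mset {p : ℕ} [Fact p.Prime] (G : Subgroup (GL (Fin 2) ℤ_[p])) (a b : ℕ) :
    Set (GL (Fin 2) ℤ_[p]) :=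
  {M | M ∈ G ∧ CondE a b M}

/-- `μ_{a,b}(G)`. -/
noncomputable def mu (p : ℕ) [Fact p.Prime] (G : Subgroup (GL (Fin 2) ℤ_[p])) (a b : ℕ) : ℚ :=
  ((redGL p (a + b + 1) '' Mset G a b).ncard : ℚ) /
    ((redGL p (a + b + 1) '' (G : Set (GL (Fin 2) ℤ_[p]))).ncard : ℚ)

/-- `G` is open in `GL₂(ℤ_p)`. -/
def IsOpenSub {p : ℕ} [Fact p.Prime] (G : Subgroup (GL (Fin 2) ℤ_[p])) : Prop :=
  ∃ m : ℕ, 1 ≤ m ∧ ∀ M : GL (Fin 2) ℤ_[p], modI m M → M ∈ G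

/-- The underlying set of the Cartan subgroup `C(c,d)`. -/
def CartanSet {p : ℕ} [Fact p.Prime] (c d : ℤ_[p]) : Set (GL (Fin 2) ℤ_[p]) :=
  {M | ∃ x y : ℤ_[p], (M : Matrix (Fin 2) (Fin 2) ℤ_[p]) = !![x, d * y; y, x + c * y]}

/-- `C` is the Cartan subgroup with parameters `(c,d)`. -/
def IsCartan {p : ℕ} [Fact p.Prime] (c d : ℤ_[p]) (C : Subgroup (GL (Fin 2) ℤ_[p])) : Prop :=
  (C : Set (GL (Fin 2) ℤ_[p])) = CartanSet c d

/-- `(c,d)` are normalized parameters. -/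
def NormalizedParams (p : ℕ) [Fact p.Prime] (c d : ℤ_[p]) : Prop :=
  (c = 0 ∧ d ≠ 0) ∨ (p = 2 ∧ c = 1 ∧ (d = 0 ∨ IsUnit d))

/-- `(c,d)` are parameters of a split Cartan subgroup. -/
def SplitParams (p : ℕ) [Fact p.Prime] (c d : ℤ_[p]) : Prop :=
  (Odd p ∧ c = 0 ∧ ∃ u : ℤ_[p], IsUnit u ∧ d = u ^ 2) ∨ (p = 2 ∧ c = 1 ∧ d = 0)

/-- `(c,d)` are parameters of a nonsplit Cartan subgroup. -/
def NonsplitParams (p : ℕ) [Fact p.Prime] (c d : ℤ_[p]) : Prop :=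
  (Odd p ∧ c = 0 ∧ IsUnit d ∧ ¬ IsSquare d) ∨ (p = 2 ∧ c = 1 ∧ IsUnit d)


variable {p : ℕ} [hp : Fact p.Prime]

theorem toZMod_zero_iff (z : ℤ_[p]) : PadicInt.toZMod z = 0 ↔ (p:ℤ_[p]) ∣ z := by
  rw [← RingHom.mem_ker, PadicInt.ker_toZMod, PadicInt.maximalIdeal_eq_span_p,
    Ideal.mem_span_singleton]

theorem padic_unit_iff (z : ℤ_[p]) : IsUnit z ↔ ¬ (p:ℤ_[p]) ∣ z := by
  rw [← not_iff_not, PadicInt.not_isUnit_iff, PadicInt.norm_lt_one_iff_dvd, not_not]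

theorem padic_unit_iff' (z : ℤ_[p]) : IsUnit z ↔ PadicInt.toZMod z ≠ 0 := by
  rw [padic_unit_iff, ← toZMod_zero_iff]

theorem toZMod_surj : Function.Surjective (PadicInt.toZMod (p:=p)) := by
  intro b
  refine ⟨(b.val : ℤ_[p]), ?_⟩
  rw [_root_.map_natCast, ZMod.natCast_val, ZMod.cast_id]

theorem hensel_sq {d : ℤ_[p]} (hodd : Odd p) (hd : IsUnit d) (h : IsSquare (PadicInt.toZMod d)) :
    IsSquare d := by
  obtain ⟨s, hs⟩ := h
  obtain ⟨a, ha⟩ := toZMod_surj s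
  have hF : ‖(X^2 - C d : ℤ_[p][X]).eval a‖ < ‖(X^2 - C d : ℤ_[p][X]).derivative.eval a‖ ^ 2 := by
    have h1 : (X^2 - C d : ℤ_[p][X]).eval a = a^2 - d := by simp
    have h2 : (X^2 - C d : ℤ_[p][X]).derivative.eval a = 2 * a := by
      simp [derivative_sub, derivative_X_pow]
      exact Or.inl one_add_one_eq_two
    rw [h1, h2]
    have hu2 : IsUnit (2 : ℤ_[p]) := by
      rw [padic_unit_iff']
      have h22 : (PadicInt.toZMod (2:ℤ_[p])) = ((2:ℕ) : ZMod p) := by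
        rw [show (2:ℤ_[p]) = ((2:ℕ):ℤ_[p]) by norm_num, _root_.map_natCast]
      rw [h22]
      intro h2z
      have hdvd : (p:ℕ) ∣ 2 := (ZMod.natCast_eq_zero_iff 2 p).mp h2z
      have hp2 : p = 2 := (Nat.prime_dvd_prime_iff_eq hp.out Nat.prime_two).mp hdvd
      exact (by decide : ¬ Odd 2) (hp2 ▸ hodd)
    have hua : IsUnit a := by
      rw [padic_unit_iff', ha]
      intro hs0
      rw [hs0, mul_zero] at hs
      exact ((padic_unit_iff' d).mp hd) hs
    have hnorm2a : ‖2 * a‖ = 1 := PadicInt.isUnit_iff.mp (hu2.mul hua)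
    rw [hnorm2a, one_pow]
    have : PadicInt.toZMod (a^2 - d) = 0 := by
      rw [_root_.map_sub, _root_.map_pow, ha, hs]; ring
    have hdd := (toZMod_zero_iff _).mp this
    exact (PadicInt.norm_lt_one_iff_dvd _).mpr hdd
  obtain ⟨z, hz, -⟩ := hensels_lemma hF
  refine ⟨z, ?_⟩
  have h0 : z^2 - d = 0 := by simpa using hz
  have := sub_eq_zero.mp h0
  rw [← this]; ring

theorem zmod2_ne0 : ∀ x : ZMod 2, x ≠ 0 → x = 1 := by decide

theorem zmod2_aniso : ∀ U V : ZMod 2, U * (U + 1 * V) - 1 * V ^ 2 = 0 → U = 0 ∧ V = 0 := by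
  decide

theorem A_unit {c d : ℤ_[p]} (hns : NonsplitParams p c d) (u v : ℤ_[p])
    (h : ¬((p:ℤ_[p]) ∣ u ∧ (p:ℤ_[p]) ∣ v)) : IsUnit (u * (u + c * v) - d * v ^ 2) := by
  rw [padic_unit_iff']
  intro h0
  rw [_root_.map_sub, _root_.map_mul, _root_.map_add, _root_.map_mul, _root_.map_mul, _root_.map_pow] at h0
  set U := PadicInt.toZMod u with hU
  set V := PadicInt.toZMod v with hV
  have hUV : ¬(U = 0 ∧ V = 0) := by
    rintro ⟨h1, h2⟩
    exact h ⟨(toZMod_zero_iff u).mp h1, (toZMod_zero_iff v).mp h2⟩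
  rcases hns with ⟨hodd, hc, hd, hsq⟩ | ⟨hp2, hc, hd⟩
  · rw [hc] at h0
    simp only [map_zero, zero_mul, add_zero] at h0
    -- h0 : U * U - toZMod d * V^2 = 0
    have hV0 : V ≠ 0 := by
      intro hV0
      refine hUV ⟨?_, hV0⟩
      have hUU : U * U = 0 := by rw [hV0] at h0; linear_combination h0
      exact mul_self_eq_zero.mp hUU
    apply hsq
    apply hensel_sq hodd hd
    refine ⟨U * V⁻¹, ?_⟩
    field_simp
    have : U * U = PadicInt.toZMod d * V ^ 2 := by linear_combination h0
    rw [← this]; ring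
  · subst hp2
    rw [hc] at h0
    have hd0 : PadicInt.toZMod d ≠ 0 := (padic_unit_iff' d).mp hd
    have hd1 : PadicInt.toZMod d = 1 := zmod2_ne0 _ hd0
    rw [hd1, _root_.map_one] at h0
    exact hUV (zmod2_aniso _ _ h0)

theorem pPow_ne_zero (k : ℕ) : ((p:ℤ_[p]))^k ≠ 0 :=
  pow_ne_zero _ (Nat.cast_ne_zero.mpr hp.out.ne_zero)

theorem A_exact {c d : ℤ_[p]} (hns : NonsplitParams p c d) (u v : ℤ_[p]) (a : ℕ)
    (h1 : (p:ℤ_[p])^a ∣ u) (h2 : (p:ℤ_[p])^a ∣ v)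
    (h3 : ¬((p:ℤ_[p])^(a+1) ∣ u ∧ (p:ℤ_[p])^(a+1) ∣ v)) :
    ((p:ℤ_[p])^(2*a) ∣ (u * (u + c * v) - d * v ^ 2)) ∧
      ¬((p:ℤ_[p])^(2*a+1) ∣ (u * (u + c * v) - d * v ^ 2)) := by
  obtain ⟨u0, rfl⟩ := h1
  obtain ⟨v0, rfl⟩ := h2
  have hne : ¬((p:ℤ_[p]) ∣ u0 ∧ (p:ℤ_[p]) ∣ v0) := by
    rintro ⟨⟨u1, rfl⟩, ⟨v1, rfl⟩⟩
    exact h3 ⟨⟨u1, by ring⟩, ⟨v1, by ring⟩⟩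
  have hQ0 := A_unit hns u0 v0 hne
  set Q0 := u0 * (u0 + c * v0) - d * v0 ^ 2 with hQ0def
  have hiden : (p:ℤ_[p])^a * u0 * ((p:ℤ_[p])^a * u0 + c * ((p:ℤ_[p])^a * v0)) -
      d * ((p:ℤ_[p])^a * v0) ^ 2 = (p:ℤ_[p])^(2*a) * Q0 := by
    rw [hQ0def]; ring
  rw [hiden]
  constructor
  · exact Dvd.intro _ rfl
  · intro hdvd
    rw [pow_succ] at hdvd
    have : (p:ℤ_[p]) ∣ Q0 := (mul_dvd_mul_iff_left (pPow_ne_zero (2*a))).mp hdvd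
    exact (padic_unit_iff Q0).mp hQ0 this

-- transfer lemmas
theorem toZModPow_surj (n : ℕ) : Function.Surjective (PadicInt.toZModPow (p:=p) n) := by
  intro b
  refine ⟨(b.val : ℤ_[p]), ?_⟩
  rw [_root_.map_natCast, ZMod.natCast_val, ZMod.cast_id]

theorem toZModPow_zero_iff (n : ℕ) (z : ℤ_[p]) :
    PadicInt.toZModPow n z = 0 ↔ (p:ℤ_[p])^n ∣ z := by
  rw [← RingHom.mem_ker, PadicInt.ker_toZModPow, Ideal.mem_span_singleton]

theorem dvd_transfer {n a : ℕ} (ha : a ≤ n) (z : ℤ_[p]) :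
    ((p : ZMod (p^n)))^a ∣ PadicInt.toZModPow n z ↔ (p:ℤ_[p])^a ∣ z := by
  constructor
  · rintro ⟨w, hw⟩
    obtain ⟨w', rfl⟩ := toZModPow_surj n w
    have h0 : PadicInt.toZModPow n (z - (p:ℤ_[p])^a * w') = 0 := by
      rw [_root_.map_sub, _root_.map_mul, _root_.map_pow, _root_.map_natCast, hw, sub_self]
    have hdn := (toZModPow_zero_iff n _).mp h0
    have h2 : (p:ℤ_[p])^a ∣ z - (p:ℤ_[p])^a * w' :=
      dvd_trans (pow_dvd_pow _ ha) hdn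
    have h3 := dvd_add h2 (dvd_mul_right ((p:ℤ_[p])^a) w')
    simpa using h3
  · rintro ⟨w, rfl⟩
    exact ⟨PadicInt.toZModPow n w, by rw [_root_.map_mul, _root_.map_pow, _root_.map_natCast]⟩

theorem unit_transfer {n : ℕ} (hn : 1 ≤ n) (z : ℤ_[p]) :
    IsUnit (PadicInt.toZModPow n z) ↔ IsUnit z := by
  constructor
  · intro h
    rw [padic_unit_iff]
    intro hdvd
    have h1 : ((p : ZMod (p^n)))^1 ∣ PadicInt.toZModPow n z := by
      rw [dvd_transfer hn]; simpa using hdvd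
    obtain ⟨w, hw⟩ := h1
    have hpn0 : ((p : ZMod (p^n)))^n = 0 := by
      have h5 : (((p^n : ℕ)) : ZMod (p^n)) = 0 := ZMod.natCast_self _
      push_cast at h5
      exact h5
    have hzn : (PadicInt.toZModPow n z)^n = 0 := by
      rw [pow_one] at hw
      rw [hw, mul_pow, hpn0, zero_mul]
    have hu := h.pow n
    rw [hzn] at hu
    have hple : (1:ℕ) < p ^ n := Nat.one_lt_pow (by omega) hp.out.one_lt
    haveI : Fact (1 < p ^ n) := ⟨hple⟩
    exact not_isUnit_zero hu
  · exact fun h => h.map _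
theorem card_preimage_hom {A B : Type*} [AddCommGroup A] [AddCommGroup B] (f : A →+ B)
    (hf : Function.Surjective f) (U : Set B) :
    Nat.card (f ⁻¹' U) = Nat.card U * Nat.card {a : A | f a = 0} := by
  classical
  have hg : ∀ b, f (Function.surjInv hf b) = b := Function.surjInv_eq hf
  have e : (f ⁻¹' U) ≃ U × {a : A | f a = 0} :=
    { toFun := fun z => (⟨f z.1, z.2⟩, ⟨z.1 - Function.surjInv hf (f z.1), by
        simp [Set.mem_setOf_eq, _root_.map_sub, hg]⟩)
      invFun := fun w => ⟨Function.surjInv hf w.1.1 + w.2.1, by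
        have : f (Function.surjInv hf w.1.1 + w.2.1) = w.1.1 := by
          rw [_root_.map_add, hg, w.2.2, add_zero]
        simp only [Set.mem_preimage, this]
        exact w.1.2⟩
      left_inv := fun z => by
        apply Subtype.ext
        simp
      right_inv := fun w => by
        have hfw : f (Function.surjInv hf w.1.1 + w.2.1) = w.1.1 := by
          rw [_root_.map_add, hg, w.2.2, add_zero]
        ext
        · simp [hfw]
        · simp [hfw] }
  rw [Nat.card_congr e, Nat.card_prod]

variable {p : ℕ} [hp : Fact p.Prime]

theorem castHom_pow_surj {n a : ℕ} (ha : a ≤ n) :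
    Function.Surjective (ZMod.castHom (pow_dvd_pow p ha) (ZMod (p^a))) := by
  haveI : NeZero (p^a) := ⟨pow_ne_zero _ hp.out.ne_zero⟩
  intro b
  refine ⟨(b.val : ZMod (p^n)), ?_⟩
  rw [_root_.map_natCast, ZMod.natCast_val, ZMod.cast_id]

theorem dvd_iff_castHom_eq_zero {n a : ℕ} (ha : a ≤ n) (x : ZMod (p^n)) :
    ((p : ZMod (p^n)))^a ∣ x ↔ ZMod.castHom (pow_dvd_pow p ha) (ZMod (p^a)) x = 0 := by
  haveI : NeZero (p^n) := ⟨pow_ne_zero _ hp.out.ne_zero⟩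
  constructor
  · rintro ⟨t, rfl⟩
    rw [_root_.map_mul, _root_.map_pow, _root_.map_natCast]
    have : ((p : ZMod (p^a)))^a = 0 := by
      have h5 : (((p^a : ℕ)) : ZMod (p^a)) = 0 := ZMod.natCast_self _
      push_cast at h5
      exact h5
    rw [this, zero_mul]
  · intro h
    have hx : x = (x.val : ZMod (p^n)) := by rw [ZMod.natCast_val, ZMod.cast_id]
    rw [hx, _root_.map_natCast] at h
    obtain ⟨m, hm⟩ := (ZMod.natCast_eq_zero_iff _ _).mp h
    rw [hx, hm]
    push_cast
    exact Dvd.intro _ rfl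

theorem card_dvd_set {n a : ℕ} (ha : a ≤ n) :
    {x : ZMod (p^n) | ((p : ZMod (p^n)))^a ∣ x}.ncard = p^(n-a) := by
  classical
  set f := ZMod.castHom (pow_dvd_pow p ha) (ZMod (p^a)) with hf
  have hsurj : Function.Surjective f := castHom_pow_surj ha
  have hcard := card_preimage_hom ((f : ZMod (p^n) →+* ZMod (p^a)) : ZMod (p^n) →+ ZMod (p^a))
    hsurj Set.univ
  have hA : Nat.card ((⇑((f : ZMod (p^n) →+* ZMod (p^a)) : ZMod (p^n) →+ ZMod (p^a))) ⁻¹' (Set.univ : Set (ZMod (p^a)))) = p^n := by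
    rw [Set.preimage_univ, Nat.card_congr (Equiv.Set.univ _), Nat.card_zmod]
  have hB : Nat.card (Set.univ : Set (ZMod (p^a))) = p^a := by
    rw [Nat.card_congr (Equiv.Set.univ _), Nat.card_zmod]
  rw [hA, hB] at hcard
  have hker : {x : ZMod (p^n) | ((f : ZMod (p^n) →+* ZMod (p^a)) : ZMod (p^n) →+ ZMod (p^a)) x = 0}
      = {x : ZMod (p^n) | ((p : ZMod (p^n)))^a ∣ x} := by
    ext x
    exact (dvd_iff_castHom_eq_zero ha x).symm
  rw [hker] at hcard
  rw [← Nat.card_coe_set_eq]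
  have hpow : p ^ n = p ^ a * p ^ (n - a) := by
    rw [← pow_add]
    congr 1
    omega
  have hfin : p ^ a * p ^ (n - a) = p ^ a * Nat.card {x : ZMod (p^n) | ((p : ZMod (p^n)))^a ∣ x} := by
    rw [← hpow]; exact hcard
  exact (Nat.eq_of_mul_eq_mul_left (pow_pos hp.out.pos a) hfin).symm

section GLLayer

variable {p : ℕ} [hp : Fact p.Prime] {c d : ℤ_[p]} {C : Subgroup (GL (Fin 2) ℤ_[p])}

/-- entry pair map -/
def fGL {R : Type*} [CommRing R] (M : GL (Fin 2) R) : R × R :=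
  ((M : Matrix (Fin 2) (Fin 2) R) 0 0, (M : Matrix (Fin 2) (Fin 2) R) 1 0)

theorem mem_C_iff (hC : IsCartan c d C) (M : GL (Fin 2) ℤ_[p]) :
    M ∈ C ↔ ∃ x y : ℤ_[p],
      (M : Matrix (Fin 2) (Fin 2) ℤ_[p]) = !![x, d * y; y, x + c * y] := by
  rw [← SetLike.mem_coe, hC]; rfl

theorem redGL_entry (n : ℕ) (M : GL (Fin 2) ℤ_[p]) (i j : Fin 2) :
    ((redGL p n M : GL (Fin 2) (ZMod (p^n))) : Matrix (Fin 2) (Fin 2) (ZMod (p^n))) i j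
      = PadicInt.toZModPow n ((M : Matrix (Fin 2) (Fin 2) ℤ_[p]) i j) := by
  simp [redGL, Matrix.GeneralLinearGroup.map_apply]

theorem red_shape (n : ℕ) (hC : IsCartan c d C) {M : GL (Fin 2) (ZMod (p^n))}
    (hM : M ∈ redGL p n '' (C : Set (GL (Fin 2) ℤ_[p]))) :
    ∃ x y : ℤ_[p], (M : Matrix (Fin 2) (Fin 2) (ZMod (p^n))) =
      !![PadicInt.toZModPow n x, PadicInt.toZModPow n d * PadicInt.toZModPow n y;
         PadicInt.toZModPow n y, PadicInt.toZModPow n x + PadicInt.toZModPow n c * PadicInt.toZModPow n y] := by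
  obtain ⟨N, hN, rfl⟩ := hM
  obtain ⟨x, y, hxy⟩ := (mem_C_iff hC N).mp hN
  refine ⟨x, y, ?_⟩
  ext i j
  rw [redGL_entry, hxy]
  fin_cases i <;> fin_cases j <;> simp

theorem fGL_injOn (n : ℕ) (hC : IsCartan c d C) :
    Set.InjOn fGL (redGL p n '' (C : Set (GL (Fin 2) ℤ_[p]))) := by
  intro M₁ h₁ M₂ h₂ heq
  obtain ⟨x₁, y₁, hM₁⟩ := red_shape n hC h₁
  obtain ⟨x₂, y₂, hM₂⟩ := red_shape n hC h₂
  have e1 : (M₁ : Matrix (Fin 2) (Fin 2) (ZMod (p^n))) 0 0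
      = (M₂ : Matrix (Fin 2) (Fin 2) (ZMod (p^n))) 0 0 := congrArg Prod.fst heq
  have e2 : (M₁ : Matrix (Fin 2) (Fin 2) (ZMod (p^n))) 1 0
      = (M₂ : Matrix (Fin 2) (Fin 2) (ZMod (p^n))) 1 0 := congrArg Prod.snd heq
  rw [hM₁, hM₂] at e1 e2
  simp at e1 e2
  apply Units.ext
  rw [hM₁, hM₂, e1, e2]

/-- build a Cartan GL element from parameters with unit `Q`. -/
theorem cartan_mk (hC : IsCartan c d C) (x y : ℤ_[p])
    (hQ : IsUnit (x * (x + c * y) - d * y ^ 2)) :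
    ∃ M : GL (Fin 2) ℤ_[p], M ∈ C ∧
      (M : Matrix (Fin 2) (Fin 2) ℤ_[p]) = !![x, d * y; y, x + c * y] := by
  have hdet : IsUnit (!![x, d * y; y, x + c * y] : Matrix (Fin 2) (Fin 2) ℤ_[p]).det := by
    rw [Matrix.det_fin_two_of]
    convert hQ using 1
    ring
  refine ⟨Matrix.GeneralLinearGroup.mk'' _ hdet, ?_, rfl⟩
  exact (mem_C_iff hC _).mpr ⟨x, y, rfl⟩

theorem det_sub_one (M : GL (Fin 2) ℤ_[p]) (x y : ℤ_[p])
    (hM : (M : Matrix (Fin 2) (Fin 2) ℤ_[p]) = !![x, d * y; y, x + c * y]) :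
    ((M : Matrix (Fin 2) (Fin 2) ℤ_[p]) - 1).det
      = (x - 1) * ((x - 1) + c * y) - d * y ^ 2 := by
  rw [hM]
  have h1 : (!![x, d * y; y, x + c * y] - 1 : Matrix (Fin 2) (Fin 2) ℤ_[p]) =
      !![x - 1, d * y; y, x + c * y - 1] := by
    ext i j
    fin_cases i <;> fin_cases j <;> simp [Matrix.sub_apply, Matrix.one_apply]
  rw [h1, Matrix.det_fin_two_of]
  ring

theorem sub_one_entries (M : GL (Fin 2) ℤ_[p]) (x y : ℤ_[p])
    (hM : (M : Matrix (Fin 2) (Fin 2) ℤ_[p]) = !![x, d * y; y, x + c * y]) :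
    ((M : Matrix (Fin 2) (Fin 2) ℤ_[p]) - 1) = !![x - 1, d * y; y, x - 1 + c * y] := by
  rw [hM]
  ext i j
  fin_cases i <;> fin_cases j <;> simp [Matrix.sub_apply, Matrix.one_apply] <;> ring

theorem modI_iff (M : GL (Fin 2) ℤ_[p]) (x y : ℤ_[p]) (k : ℕ)
    (hM : (M : Matrix (Fin 2) (Fin 2) ℤ_[p]) = !![x, d * y; y, x + c * y]) :
    modI k M ↔ ((p:ℤ_[p])^k ∣ x - 1 ∧ (p:ℤ_[p])^k ∣ y) := by
  rw [modI]
  constructor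
  · intro h
    refine ⟨?_, ?_⟩
    · have := h 0 0
      rwa [sub_one_entries M x y hM] at this
    · have := h 1 0
      rwa [sub_one_entries M x y hM] at this
  · rintro ⟨h1, h2⟩ i j
    rw [sub_one_entries M x y hM]
    fin_cases i <;> fin_cases j <;> simp
    · exact h1
    · exact Dvd.dvd.mul_left h2 d
    · exact h2
    · exact dvd_add h1 (Dvd.dvd.mul_left h2 c)

end GLLayer

section Images

variable {p : ℕ} [hp : Fact p.Prime] {c d : ℤ_[p]} {C : Subgroup (GL (Fin 2) ℤ_[p])}

theorem A_nonunit (c d : ℤ_[p]) {u v : ℤ_[p]} (hu : (p:ℤ_[p]) ∣ u) (hv : (p:ℤ_[p]) ∣ v) :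
    (p:ℤ_[p]) ∣ (u * (u + c * v) - d * v ^ 2) := by
  obtain ⟨u0, rfl⟩ := hu
  obtain ⟨v0, rfl⟩ := hv
  exact ⟨u0 * ((p:ℤ_[p]) * u0 + c * ((p:ℤ_[p]) * v0)) - d * (p:ℤ_[p]) * v0 ^ 2, by ring⟩

theorem image_den (n : ℕ) (hn : 1 ≤ n) (hC : IsCartan c d C) (hns : NonsplitParams p c d) :
    fGL '' (redGL p n '' (C : Set (GL (Fin 2) ℤ_[p]))) =
      {w : ZMod (p^n) × ZMod (p^n) | ¬((p:ZMod (p^n)) ∣ w.1 ∧ (p:ZMod (p^n)) ∣ w.2)} := by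
  ext w
  constructor
  · rintro ⟨M, ⟨N, hN, rfl⟩, rfl⟩
    obtain ⟨x, y, hxy⟩ := (mem_C_iff hC N).mp hN
    have hw1 : (fGL (redGL p n N)).1 = PadicInt.toZModPow n x := by
      simp [fGL, redGL_entry, hxy]
    have hw2 : (fGL (redGL p n N)).2 = PadicInt.toZModPow n y := by
      simp [fGL, redGL_entry, hxy]
    have hdet := (Matrix.isUnit_iff_isUnit_det _).mp N.isUnit
    rw [hxy, Matrix.det_fin_two_of] at hdet
    have hQ : IsUnit (x * (x + c * y) - d * y ^ 2) := by
      convert hdet using 1; ring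
    rintro ⟨h1, h2⟩
    rw [hw1] at h1
    rw [hw2] at h2
    have hx : (p:ℤ_[p]) ∣ x := by
      have := (dvd_transfer hn x).mp (by simpa using h1)
      simpa using this
    have hy : (p:ℤ_[p]) ∣ y := by
      have := (dvd_transfer hn y).mp (by simpa using h2)
      simpa using this
    exact (padic_unit_iff _).mp hQ (A_nonunit c d hx hy)
  · intro hw
    obtain ⟨x, hx⟩ := toZModPow_surj n w.1
    obtain ⟨y, hy⟩ := toZModPow_surj n w.2
    have hnd : ¬((p:ℤ_[p]) ∣ x ∧ (p:ℤ_[p]) ∣ y) := by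
      rintro ⟨⟨x0, rfl⟩, ⟨y0, rfl⟩⟩
      refine hw ⟨⟨PadicInt.toZModPow n x0, ?_⟩, ⟨PadicInt.toZModPow n y0, ?_⟩⟩
      · rw [← hx, _root_.map_mul, _root_.map_natCast]
      · rw [← hy, _root_.map_mul, _root_.map_natCast]
    obtain ⟨M, hMC, hMval⟩ := cartan_mk hC x y (A_unit hns x y hnd)
    refine ⟨redGL p n M, ⟨M, hMC, rfl⟩, ?_⟩
    have e1 : (fGL (redGL p n M)).1 = w.1 := by simp [fGL, redGL_entry, hMval, hx]
    have e2 : (fGL (redGL p n M)).2 = w.2 := by simp [fGL, redGL_entry, hMval, hy]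
    exact Prod.ext e1 e2

theorem image_num (a : ℕ) (hC : IsCartan c d C) (hns : NonsplitParams p c d) :
    fGL '' (redGL p (a+1) '' Mset C a 0) =
      {w : ZMod (p^(a+1)) × ZMod (p^(a+1)) |
        (p:ZMod (p^(a+1)))^a ∣ (w.1 - 1) ∧ (p:ZMod (p^(a+1)))^a ∣ w.2 ∧
        ¬(w.1 = 1 ∧ w.2 = 0) ∧ ¬((p:ZMod (p^(a+1))) ∣ w.1 ∧ (p:ZMod (p^(a+1))) ∣ w.2)} := by
  have hle : a ≤ a + 1 := Nat.le_succ a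
  have hn1 : 1 ≤ a + 1 := Nat.succ_le_succ (Nat.zero_le a)
  ext w
  constructor
  · rintro ⟨M, ⟨N, hN, rfl⟩, rfl⟩
    obtain ⟨hNC, hmod, hnmod, hval⟩ := hN
    obtain ⟨x, y, hxy⟩ := (mem_C_iff hC N).mp hNC
    obtain ⟨hd1, hd2⟩ := (modI_iff N x y a hxy).mp hmod
    have hw1 : (fGL (redGL p (a+1) N)).1 = PadicInt.toZModPow (a+1) x := by
      simp [fGL, redGL_entry, hxy]
    have hw2 : (fGL (redGL p (a+1) N)).2 = PadicInt.toZModPow (a+1) y := by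
      simp [fGL, redGL_entry, hxy]
    have hsub : (fGL (redGL p (a+1) N)).1 - 1 = PadicInt.toZModPow (a+1) (x - 1) := by
      rw [hw1, _root_.map_sub, _root_.map_one]
    refine ⟨?_, ?_, ?_, ?_⟩
    · rw [hsub]; exact (dvd_transfer hle _).mpr hd1
    · rw [hw2]; exact (dvd_transfer hle _).mpr hd2
    · rintro ⟨e1, e2⟩
      apply hnmod
      apply (modI_iff N x y (a+1) hxy).mpr
      constructor
      · apply (toZModPow_zero_iff (a+1) _).mp
        rw [← hsub, e1, sub_self]
      · apply (toZModPow_zero_iff (a+1) _).mp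
        rw [← hw2, e2]
    · rintro ⟨h1, h2⟩
      rw [hw1] at h1
      rw [hw2] at h2
      have hx : (p:ℤ_[p]) ∣ x := by
        have := (dvd_transfer hn1 x).mp (by simpa using h1)
        simpa using this
      have hy : (p:ℤ_[p]) ∣ y := by
        have := (dvd_transfer hn1 y).mp (by simpa using h2)
        simpa using this
      have hdet := (Matrix.isUnit_iff_isUnit_det _).mp N.isUnit
      rw [hxy, Matrix.det_fin_two_of] at hdet
      have hQ : IsUnit (x * (x + c * y) - d * y ^ 2) := by
        convert hdet using 1; ring
      exact (padic_unit_iff _).mp hQ (A_nonunit c d hx hy)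
  · rintro ⟨h1, h2, h3, h4⟩
    obtain ⟨s, hs⟩ := h1
    obtain ⟨t, ht⟩ := h2
    obtain ⟨s', rfl⟩ := toZModPow_surj (a+1) s
    obtain ⟨t', rfl⟩ := toZModPow_surj (a+1) t
    set x := 1 + (p:ℤ_[p])^a * s' with hxdef
    set y := (p:ℤ_[p])^a * t' with hydef
    have hφx : PadicInt.toZModPow (a+1) x = w.1 := by
      rw [hxdef, _root_.map_add, _root_.map_one, _root_.map_mul, _root_.map_pow,
        _root_.map_natCast, ← hs]
      ring
    have hφy : PadicInt.toZModPow (a+1) y = w.2 := by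
      rw [hydef, _root_.map_mul, _root_.map_pow, _root_.map_natCast, ← ht]
    have hx1 : (p:ℤ_[p])^a ∣ x - 1 := ⟨s', by rw [hxdef]; ring⟩
    have hy1 : (p:ℤ_[p])^a ∣ y := ⟨t', rfl⟩
    have h3' : ¬((p:ℤ_[p])^(a+1) ∣ x - 1 ∧ (p:ℤ_[p])^(a+1) ∣ y) := by
      rintro ⟨ha', hb'⟩
      apply h3
      constructor
      · have := (toZModPow_zero_iff (a+1) _).mpr ha'
        rw [_root_.map_sub, _root_.map_one, hφx] at this
        have := sub_eq_zero.mp this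
        exact this.symm ▸ rfl
      · have := (toZModPow_zero_iff (a+1) _).mpr hb'
        rw [hφy] at this
        exact this
    have h4' : ¬((p:ℤ_[p]) ∣ x ∧ (p:ℤ_[p]) ∣ y) := by
      rintro ⟨⟨x0, hx0⟩, ⟨y0, hy0⟩⟩
      refine h4 ⟨⟨PadicInt.toZModPow (a+1) x0, ?_⟩, ⟨PadicInt.toZModPow (a+1) y0, ?_⟩⟩
      · rw [← hφx, hx0, _root_.map_mul, _root_.map_natCast]
      · rw [← hφy, hy0, _root_.map_mul, _root_.map_natCast]
    obtain ⟨M, hMC, hMval⟩ := cartan_mk hC x y (A_unit hns x y h4')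
    have hexact := A_exact hns (x - 1) y a hx1 hy1 h3'
    refine ⟨redGL p (a+1) M, ⟨M, ⟨hMC, ?_, ?_, ?_⟩, rfl⟩, ?_⟩
    · exact (modI_iff M x y a hMval).mpr ⟨hx1, hy1⟩
    · intro hmod
      exact h3' ((modI_iff M x y (a+1) hMval).mp hmod)
    · rw [det_sub_one M x y hMval]
      constructor
      · have : 2 * a + 0 = 2 * a := rfl
        rw [this]
        exact hexact.1
      · have : 2 * a + 0 + 1 = 2 * a + 1 := rfl
        rw [this]
        exact hexact.2
    · have e1 : (fGL (redGL p (a+1) M)).1 = w.1 := by simp [fGL, redGL_entry, hMval, hφx]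
      have e2 : (fGL (redGL p (a+1) M)).2 = w.2 := by simp [fGL, redGL_entry, hMval, hφy]
      exact Prod.ext e1 e2

end Images

section Counts

variable {p : ℕ} [hp : Fact p.Prime] {c d : ℤ_[p]} {C : Subgroup (GL (Fin 2) ℤ_[p])}

omit hp in
theorem ncard_prod' {α β : Type*} (s : Set α) (t : Set β) :
    (s ×ˢ t).ncard = s.ncard * t.ncard := by
  rw [← Nat.card_coe_set_eq, ← Nat.card_coe_set_eq, ← Nat.card_coe_set_eq,
    Nat.card_congr (Equiv.Set.prod s t), Nat.card_prod]

theorem pow_n_eq_zero (n : ℕ) : ((p : ZMod (p^n)))^n = 0 := by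
  have h5 : (((p^n : ℕ)) : ZMod (p^n)) = 0 := ZMod.natCast_self _
  push_cast at h5
  exact h5

theorem p_not_unit {n : ℕ} (hn : 1 ≤ n) : ¬ IsUnit ((p : ZMod (p^n))) := by
  intro h
  have h0 := h.pow n
  rw [pow_n_eq_zero] at h0
  haveI : Fact (1 < p ^ n) := ⟨Nat.one_lt_pow (by omega) hp.out.one_lt⟩
  exact not_isUnit_zero h0

theorem ncard_den (n : ℕ) (hn : 1 ≤ n) (hC : IsCartan c d C) (hns : NonsplitParams p c d) :
    (redGL p n '' (C : Set (GL (Fin 2) ℤ_[p]))).ncard + p^(n-1) * p^(n-1) = p^n * p^n := by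
  classical
  have hinj := fGL_injOn (c := c) (d := d) n hC
  have himg := image_den n hn hC hns
  have hcnt : (redGL p n '' (C : Set (GL (Fin 2) ℤ_[p]))).ncard =
      {w : ZMod (p^n) × ZMod (p^n) | ¬((p:ZMod (p^n)) ∣ w.1 ∧ (p:ZMod (p^n)) ∣ w.2)}.ncard := by
    rw [← himg, Set.ncard_image_of_injOn hinj]
  rw [hcnt]
  set K : Set (ZMod (p^n)) := {x | ((p:ZMod (p^n)))^1 ∣ x} with hK
  have hset : {w : ZMod (p^n) × ZMod (p^n) | ¬((p:ZMod (p^n)) ∣ w.1 ∧ (p:ZMod (p^n)) ∣ w.2)}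
      = (K ×ˢ K)ᶜ := by
    ext w
    simp [hK, Set.mem_prod, pow_one]
  rw [hset]
  have hKcard : K.ncard = p^(n-1) := card_dvd_set hn
  have hcompl := Set.ncard_add_ncard_compl (K ×ˢ K)
  rw [ncard_prod', hKcard] at hcompl
  have huniv : Nat.card (ZMod (p^n) × ZMod (p^n)) = p^n * p^n := by
    rw [Nat.card_prod, Nat.card_zmod]
  rw [huniv] at hcompl
  omega

theorem ncard_num_pos (a : ℕ) (ha : 1 ≤ a) (hC : IsCartan c d C)
    (hns : NonsplitParams p c d) :
    (redGL p (a+1) '' Mset C a 0).ncard + 1 = p * p := by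
  classical
  have hle : a ≤ a + 1 := Nat.le_succ a
  have hinj : Set.InjOn fGL (redGL p (a+1) '' Mset C a 0) := by
    apply (fGL_injOn (c := c) (d := d) (a+1) hC).mono
    apply Set.image_mono
    intro M hM
    exact hM.1
  have himg := image_num a hC hns
  have hcnt := (Set.ncard_image_of_injOn hinj).symm
  rw [himg] at hcnt
  -- identify the set with (K' ×ˢ K) \ {(1,0)}
  set R := ZMod (p^(a+1))
  set K : Set R := {x | ((p:R))^a ∣ x} with hK
  set K' : Set R := (fun t => 1 + t) '' K with hK'
  have hmemK' : ∀ x : R, x ∈ K' ↔ ((p:R))^a ∣ x - 1 := by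
    intro x
    constructor
    · rintro ⟨t, ht, rfl⟩
      simpa [hK] using ht
    · intro h
      exact ⟨x - 1, h, by ring⟩
  have hset : {w : R × R | ((p:R))^a ∣ (w.1 - 1) ∧ ((p:R))^a ∣ w.2 ∧
        ¬(w.1 = 1 ∧ w.2 = 0) ∧ ¬((p:R) ∣ w.1 ∧ (p:R) ∣ w.2)}
      = (K' ×ˢ K) \ {((1:R), (0:R))} := by
    ext w
    simp only [Set.mem_setOf_eq, Set.mem_diff, Set.mem_prod, Set.mem_singleton_iff,
      hmemK', hK, Prod.ext_iff]
    constructor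
    · rintro ⟨h1, h2, h3, h4⟩
      exact ⟨⟨h1, h2⟩, h3⟩
    · rintro ⟨⟨h1, h2⟩, h3⟩
      refine ⟨h1, h2, h3, ?_⟩
      rintro ⟨hp1, hp2⟩
      have hpd : (p:R) ∣ w.1 - 1 := dvd_trans (dvd_pow_self _ (by omega)) h1
      have : (p:R) ∣ 1 := by
        have := dvd_sub hp1 hpd
        simpa using this
      exact p_not_unit (by omega : 1 ≤ a + 1) (isUnit_of_dvd_one this)
  rw [hset] at hcnt
  have hKcard : K.ncard = p := by
    have := card_dvd_set (p := p) (n := a+1) (a := a) hle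
    simpa using this
  have hK'card : K'.ncard = p := by
    rw [hK', Set.ncard_image_of_injective _ (add_right_injective (1:R)), hKcard]
  have hmem : ((1:R), (0:R)) ∈ K' ×ˢ K := by
    constructor
    · rw [hmemK']; simp
    · simp [hK]
  have hdiff := Set.ncard_diff_singleton_of_mem hmem
  rw [ncard_prod', hKcard, hK'card] at hdiff
  rw [hcnt, hdiff]
  have : 1 ≤ p * p := Nat.mul_pos hp.out.pos hp.out.pos
  omega

theorem ncard_num_zero (hC : IsCartan c d C) (hns : NonsplitParams p c d) :
    (redGL p 1 '' Mset C 0 0).ncard + 2 = p * p := by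
  classical
  haveI : Fact (1 < p ^ 1) := ⟨by simpa using hp.out.one_lt⟩
  have hinj : Set.InjOn fGL (redGL p 1 '' Mset C 0 0) := by
    apply (fGL_injOn (c := c) (d := d) 1 hC).mono
    apply Set.image_mono
    intro M hM
    exact hM.1
  have himg := image_num 0 hC hns
  have hcnt := (Set.ncard_image_of_injOn hinj).symm
  rw [himg] at hcnt
  set R := ZMod (p^(0+1))
  have hdvd0 : ∀ x : R, (p:R) ∣ x ↔ x = 0 := by
    intro x
    constructor
    · rintro ⟨t, rfl⟩
      have : (p:R) = 0 := by
        have := pow_n_eq_zero (p := p) 1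
        simpa using this
      rw [this, zero_mul]
    · rintro rfl
      exact dvd_zero _
  have hset : {w : R × R | ((p:R))^0 ∣ (w.1 - 1) ∧ ((p:R))^0 ∣ w.2 ∧
        ¬(w.1 = 1 ∧ w.2 = 0) ∧ ¬((p:R) ∣ w.1 ∧ (p:R) ∣ w.2)}
      = Set.univ \ {((1:R), (0:R)), ((0:R), (0:R))} := by
    ext w
    simp only [Set.mem_setOf_eq, Set.mem_diff, Set.mem_univ, true_and, Set.mem_insert_iff,
      Set.mem_singleton_iff, Prod.ext_iff, pow_zero, one_dvd, true_and, hdvd0]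
    tauto
  rw [hset] at hcnt
  have hne : ((1:R), (0:R)) ≠ ((0:R), (0:R)) := by
    intro h
    exact one_ne_zero (congrArg Prod.fst h)
  have hsub : ({((1:R), (0:R)), ((0:R), (0:R))} : Set (R × R)) ⊆ Set.univ := Set.subset_univ _
  have hdiff := Set.ncard_diff hsub (Set.toFinite _)
  rw [Set.ncard_pair hne, Set.ncard_univ] at hdiff
  have huniv : Nat.card (R × R) = p * p := by
    rw [Nat.card_prod]
    have : Nat.card R = p := by
      rw [Nat.card_zmod, pow_one]
    rw [this]
  rw [huniv] at hdiff
  rw [hcnt, hdiff]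
  have hp2 : 2 ≤ p := hp.out.two_le
  have : 4 ≤ p * p := Nat.mul_le_mul hp2 hp2
  omega

theorem Mset_empty' (hC : IsCartan c d C) (hns : NonsplitParams p c d) (a b : ℕ)
    (hb : 0 < b) : Mset C a b = ∅ := by
  ext M
  simp only [Set.mem_empty_iff_false, iff_false]
  rintro ⟨hMC, hmod, hnmod, hval⟩
  obtain ⟨x, y, hxy⟩ := (mem_C_iff hC M).mp hMC
  obtain ⟨h1, h2⟩ := (modI_iff M x y a hxy).mp hmod
  have h3 : ¬((p:ℤ_[p])^(a+1) ∣ x - 1 ∧ (p:ℤ_[p])^(a+1) ∣ y) := by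
    intro hh
    exact hnmod ((modI_iff M x y (a+1) hxy).mpr hh)
  have hexact := A_exact hns (x - 1) y a h1 h2 h3
  rw [det_sub_one M x y hxy] at hval
  apply hexact.2
  exact dvd_trans (pow_dvd_pow _ (by omega : 2*a + 1 ≤ 2*a + b)) hval.1

end Counts

/-- the values `μ_{a,b}(C)` for a nonsplit Cartan subgroup; moreover
`𝓜_{a,b}(C)` is empty whenever `b > 0`. -/
theorem mu_nonsplit_Cartan_values
    (p : ℕ) [Fact p.Prime] (c d : ℤ_[p]) (C : Subgroup (GL (Fin 2) ℤ_[p]))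
    (hC : IsCartan c d C) (hnonsplit : NonsplitParams p c d) (a b : ℕ) :
    (mu p C a b =
      if a = 0 ∧ b = 0 then ((p : ℚ) ^ 2 - 2) / ((p : ℚ) ^ 2 - 1)
      else if b = 0 then ((p : ℚ) ^ (2 * a))⁻¹
      else 0) ∧
    (0 < b → Mset C a b = ∅) := by
  have hp : Fact p.Prime := ‹_›
  refine ⟨?_, fun hb => Mset_empty' hC hnonsplit a b hb⟩
  by_cases hb : b = 0
  · subst hb
    set P : ℚ := (p : ℚ) with hPdef
    have hP2 : (2:ℚ) ≤ P := by rw [hPdef]; exact_mod_cast hp.out.two_le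
    have hPP1 : P * P - 1 ≠ 0 := by nlinarith
    rcases Nat.eq_zero_or_pos a with ha | ha
    · subst ha
      rw [if_pos ⟨rfl, rfl⟩]
      have hnum := ncard_num_zero hC hnonsplit
      have hden := ncard_den 1 le_rfl hC hnonsplit
      show (((redGL p 1 '' Mset C 0 0).ncard : ℚ)) /
        (((redGL p 1 '' (C : Set (GL (Fin 2) ℤ_[p]))).ncard : ℚ)) = _
      have hNQ : (((redGL p 1 '' Mset C 0 0).ncard : ℚ)) = P * P - 2 := by
        have hc := congrArg (Nat.cast : ℕ → ℚ) hnum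
        push_cast at hc
        linarith
      have hDQ : (((redGL p 1 '' (C : Set (GL (Fin 2) ℤ_[p]))).ncard : ℚ)) = P * P - 1 := by
        have hc := congrArg (Nat.cast : ℕ → ℚ) hden
        push_cast at hc
        linarith [hc]
      rw [hNQ, hDQ]
      rw [show (P:ℚ)^2 = P * P from sq P]
    · have hane : ¬(a = 0 ∧ (0:ℕ) = 0) := fun h => by omega
      rw [if_neg hane, if_pos rfl]
      have hnum := ncard_num_pos a ha hC hnonsplit
      have hden := ncard_den (a+1) (by omega) hC hnonsplit
      show (((redGL p (a+1) '' Mset C a 0).ncard : ℚ)) /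
        (((redGL p (a+1) '' (C : Set (GL (Fin 2) ℤ_[p]))).ncard : ℚ)) = _
      have hNQ : (((redGL p (a+1) '' Mset C a 0).ncard : ℚ)) = P * P - 1 := by
        have hc := congrArg (Nat.cast : ℕ → ℚ) hnum
        push_cast at hc
        linarith
      have hDQ : (((redGL p (a+1) '' (C : Set (GL (Fin 2) ℤ_[p]))).ncard : ℚ))
          = P ^ (2*a) * (P * P - 1) := by
        have hc := congrArg (Nat.cast : ℕ → ℚ) hden
        push_cast at hc
        linear_combination hc
      rw [hNQ, hDQ]
      have hPne : P ≠ 0 := by linarith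
      rw [show P ^ (2*a) * (P*P-1) = (P*P-1) * P^(2*a) from mul_comm _ _, ← div_div,
        div_self hPP1, one_div]
  · have h0 : Mset C a b = ∅ := Mset_empty' hC hnonsplit a b (Nat.pos_of_ne_zero hb)
    rw [if_neg (fun h => hb h.2), if_neg hb]
    show (((redGL p (a+b+1) '' Mset C a b).ncard : ℚ)) / _ = 0
    rw [h0, Set.image_empty, Set.ncard_empty, Nat.cast_zero, zero_div]
end

section
/- Let M ∈ GL₂(ℤ_ℓ) and let a, b ≥ 0 be integers. The group of fixed points {x ∈ ℚ_ℓ²/ℤ_ℓ² : M·x = x} (where M acts on the quotient module ℚ_ℓ²/ℤ_ℓ² induced by its action on ℚ_ℓ²) is isomorphic as an abelian group to ℤ/ℓ^aℤ × ℤ/ℓ^{a+b}ℤ if and only if M ≡ I (mod ℓ^a), M ≢ I (mod ℓ^{a+1}), and v_ℓ(det(M − I)) = 2a + b. -/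
open Matrix

/-- The standard lattice `ℤ_p² ⊆ ℚ_p²` as an additive subgroup. -/
noncomputable def stdLattice (p : ℕ) [Fact p.Prime] : AddSubgroup (Fin 2 → ℚ_[p]) where
  carrier := {v | ∀ i, ‖v i‖ ≤ 1}
  zero_mem' := by intro i; simp
  add_mem' := by
    intro a b ha hb i
    exact le_trans (Padic.nonarchimedean (a i) (b i)) (max_le (ha i) (hb i))
  neg_mem' := by
    intro a ha i
    simpa using ha i

/-- The additive map of `ℚ_p²` given by a matrix with entries in `ℤ_p`. -/
noncomputable def matQMap (p : ℕ) [Fact p.Prime] (M : Matrix (Fin 2) (Fin 2) ℤ_[p]) :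
    (Fin 2 → ℚ_[p]) →+ (Fin 2 → ℚ_[p]) :=
  (Matrix.mulVecLin (M.map ((↑) : ℤ_[p] → ℚ_[p]))).toAddMonoidHom

lemma matQMap_lattice_le (p : ℕ) [Fact p.Prime] (M : Matrix (Fin 2) (Fin 2) ℤ_[p]) :
    stdLattice p ≤ (stdLattice p).comap (matQMap p M) := by
  intro v hv
  rw [AddSubgroup.mem_comap]
  intro i
  have hx : matQMap p M v i = (M i 0 : ℚ_[p]) * v 0 + (M i 1 : ℚ_[p]) * v 1 := by
    simp [matQMap, Matrix.mulVecLin_apply, Matrix.mulVec, dotProduct,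
      Fin.sum_univ_two, Matrix.map_apply]
    rfl
  show ‖matQMap p M v i‖ ≤ 1
  rw [hx]
  have h0 : ‖(M i 0 : ℚ_[p]) * v 0‖ ≤ 1 := by
    rw [norm_mul]
    simpa using mul_le_mul (M i 0).property (hv 0) (norm_nonneg _) zero_le_one
  have h1 : ‖(M i 1 : ℚ_[p]) * v 1‖ ≤ 1 := by
    rw [norm_mul]
    simpa using mul_le_mul (M i 1).property (hv 1) (norm_nonneg _) zero_le_one
  exact le_trans (Padic.nonarchimedean _ _) (max_le h0 h1)

/-- The action of `M ∈ GL₂(ℤ_p)` on `ℚ_p²/ℤ_p²`. -/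
noncomputable def actQ (p : ℕ) [Fact p.Prime] (M : GL (Fin 2) ℤ_[p]) :
    (Fin 2 → ℚ_[p]) ⧸ stdLattice p →+ (Fin 2 → ℚ_[p]) ⧸ stdLattice p :=
  QuotientAddGroup.map _ _ (matQMap p (M : Matrix (Fin 2) (Fin 2) ℤ_[p]))
    (matQMap_lattice_le p _)

/-- The group of fixed points of `M` acting on `ℚ_p²/ℤ_p²`. -/
noncomputable def fixedPts (p : ℕ) [Fact p.Prime] (M : GL (Fin 2) ℤ_[p]) :
    AddSubgroup ((Fin 2 → ℚ_[p]) ⧸ stdLattice p) where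
  carrier := {q | actQ p M q = q}
  zero_mem' := by simp
  add_mem' := by
    intro x y hx hy
    simp only [Set.mem_setOf_eq, map_add] at *
    rw [hx, hy]
  neg_mem' := by
    intro x hx
    simp only [Set.mem_setOf_eq, map_neg] at *
    rw [hx]

section Work

variable {p : ℕ} [hp : Fact p.Prime]

local notation "R" => ℤ_[p]
local notation "Mat" => Matrix (Fin 2) (Fin 2) ℤ_[p]
local notation "Q" => (Fin 2 → ℚ_[p]) ⧸ stdLattice p

lemma matCoe_mul (A B : Mat) :
    (A * B).map ((↑) : ℤ_[p] → ℚ_[p]) = A.map (↑) * B.map (↑) := by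
  ext i j
  simp [Matrix.map_apply, Matrix.mul_apply, Fin.sum_univ_two]
  simp only [Matrix.map, Matrix.of_apply, Matrix.mul_apply, Fin.sum_univ_two]
  push_cast
  rfl

lemma matCoe_one : ((1 : Mat)).map ((↑) : ℤ_[p] → ℚ_[p]) = 1 := by
  exact Matrix.map_one _ (by push_cast; rfl) (by push_cast; rfl)

lemma matQMap_mul_apply (A B : Mat) (v : Fin 2 → ℚ_[p]) :
    matQMap p (A * B) v = matQMap p A (matQMap p B v) := by
  simp [matQMap, matCoe_mul, Matrix.mulVec_mulVec]

lemma matQMap_one_apply (v : Fin 2 → ℚ_[p]) : matQMap p (1 : Mat) v = v := by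
  simp [matQMap, matCoe_one]

lemma matQMap_sub_one_apply (A : Mat) (v : Fin 2 → ℚ_[p]) :
    matQMap p (A - 1) v = matQMap p A v - v := by
  have h : (A - 1).map ((↑) : ℤ_[p] → ℚ_[p]) = A.map (↑) - 1 := by
    ext i j
    have h1 := congrFun (congrFun (matCoe_one (p := p)) i) j
    erw [Matrix.map_apply] at h1
    simp only [Matrix.map, Matrix.of_apply, Matrix.sub_apply]
    push_cast
    rw [h1]
  simp [matQMap, h, Matrix.sub_mulVec]

/-- The subgroup of `ℚ_p²/ℤ_p²` consisting of classes of `v` with `A v ∈ ℤ_p²`. -/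
noncomputable def KQ (A : Mat) : AddSubgroup Q :=
  ((stdLattice p).comap (matQMap p A)).map (QuotientAddGroup.mk' (stdLattice p))

lemma mk_mem_KQ {A : Mat} {v : Fin 2 → ℚ_[p]} :
    (v : Q) ∈ KQ A ↔ matQMap p A v ∈ stdLattice p := by
  constructor
  · rintro ⟨w, hw, hwv⟩
    have hsub : -w + v ∈ stdLattice p := by
      rwa [← QuotientAddGroup.eq] 
    have h2 := matQMap_lattice_le p A hsub
    simp only [SetLike.mem_coe, AddSubgroup.mem_comap] at h2 hw
    have : matQMap p A v = matQMap p A w + matQMap p A (-w + v) := by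
      rw [← map_add]; congr 1; abel
    rw [this]
    exact (stdLattice p).add_mem hw h2
  · intro h
    exact ⟨v, h, rfl⟩

lemma fixedPts_eq (M : GL (Fin 2) ℤ_[p]) :
    fixedPts p M = KQ ((M : Mat) - 1) := by
  ext q
  induction q using QuotientAddGroup.induction_on with
  | H v =>
    show actQ p M (v : Q) = (v : Q) ↔ _
    rw [mk_mem_KQ]
    have h2 : actQ p M (v : Q) = ((matQMap p (M : Mat) v : Fin 2 → ℚ_[p]) : Q) := rfl
    rw [h2, QuotientAddGroup.eq]
    rw [matQMap_sub_one_apply]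
    constructor
    · intro h
      have h' := (stdLattice p).neg_mem h
      have he : -(-(matQMap p (M : Mat) v) + v) = matQMap p (M : Mat) v - v := by abel
      rwa [he] at h'
    · intro h
      have h' := (stdLattice p).neg_mem h
      have he : -(matQMap p (M : Mat) v - v) = -(matQMap p (M : Mat) v) + v := by abel
      rwa [he] at h'

lemma KQ_unit_mul {U : Mat} (hU : IsUnit U.det) (A : Mat) : KQ (U * A) = KQ A := by
  ext q
  induction q using QuotientAddGroup.induction_on with
  | H v =>
    rw [mk_mem_KQ, mk_mem_KQ, matQMap_mul_apply]
    constructor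
    · intro h
      have h2 := matQMap_lattice_le p U⁻¹ h
      rw [AddSubgroup.mem_comap, ← matQMap_mul_apply, Matrix.nonsing_inv_mul U hU,
        matQMap_one_apply] at h2
      exact h2
    · intro h
      exact matQMap_lattice_le p U h

/-- The endomorphism of `ℚ_p²/ℤ_p²` induced by a matrix. -/
noncomputable def qmap (A : Mat) : Q →+ Q :=
  QuotientAddGroup.map _ _ (matQMap p A) (matQMap_lattice_le p A)

lemma qmap_mk (A : Mat) (v : Fin 2 → ℚ_[p]) :
    qmap A (v : Q) = ((matQMap p A v : Fin 2 → ℚ_[p]) : Q) := rfl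

/-- The automorphism of `ℚ_p²/ℤ_p²` induced by an invertible matrix. -/
noncomputable def qequiv {V : Mat} (hV : IsUnit V.det) : Q ≃+ Q where
  toFun := qmap V
  invFun := qmap V⁻¹
  left_inv := by
    intro q
    induction q using QuotientAddGroup.induction_on with
    | H v => rw [qmap_mk, qmap_mk, ← matQMap_mul_apply, Matrix.nonsing_inv_mul V hV,
        matQMap_one_apply]
  right_inv := by
    intro q
    induction q using QuotientAddGroup.induction_on with
    | H v => rw [qmap_mk, qmap_mk, ← matQMap_mul_apply, Matrix.mul_nonsing_inv V hV,
        matQMap_one_apply]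
  map_add' := map_add _

noncomputable def KQmulUnitEquiv {V : Mat} (hV : IsUnit V.det) (A : Mat) :
    KQ (A * V) ≃+ KQ A := by
  refine ((qequiv hV).addSubgroupMap (KQ (A * V))).trans (AddEquiv.addSubgroupCongr ?_)
  ext q
  rw [AddSubgroup.mem_map]
  constructor
  · rintro ⟨x, hx, rfl⟩
    induction x using QuotientAddGroup.induction_on with
    | H v =>
      rw [mk_mem_KQ, matQMap_mul_apply] at hx
      show ((matQMap p V v : Fin 2 → ℚ_[p]) : Q) ∈ KQ A
      rw [mk_mem_KQ]
      exact hx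
  · intro hq
    refine ⟨(qequiv hV).symm q, ?_, (qequiv hV).apply_symm_apply q⟩
    revert hq
    induction q using QuotientAddGroup.induction_on with
    | H v =>
      intro hq
      show ((matQMap p V⁻¹ v : Fin 2 → ℚ_[p]) : Q) ∈ KQ (A * V)
      rw [mk_mem_KQ, ← matQMap_mul_apply, Matrix.mul_nonsing_inv_cancel_right (A := V) A hV]
      exact mk_mem_KQ.mp hq

end Work
section Work2

variable {p : ℕ} [hp : Fact p.Prime]

local notation "R" => ℤ_[p]
local notation "Mat" => Matrix (Fin 2) (Fin 2) ℤ_[p]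
local notation "Q" => (Fin 2 → ℚ_[p]) ⧸ stdLattice p

lemma mk_zsmul (z : ℤ) (v : Fin 2 → ℚ_[p]) :
    ((z • v : Fin 2 → ℚ_[p]) : Q) = z • (v : Q) :=
  map_zsmul (QuotientAddGroup.mk' (stdLattice p)) _ _

lemma matQMap_apply (A : Mat) (v : Fin 2 → ℚ_[p]) (i : Fin 2) :
    matQMap p A v i = (A i 0 : ℚ_[p]) * v 0 + (A i 1 : ℚ_[p]) * v 1 := by
  simp [matQMap, Matrix.mulVecLin_apply, Matrix.mulVec, dotProduct,
    Fin.sum_univ_two, Matrix.map_apply]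
  rfl

/-- basis element `p^{-k} e_i` of the quotient. -/
noncomputable def wvec (k : ℕ) (i : Fin 2) : Fin 2 → ℚ_[p] :=
  Pi.single i ((p : ℚ_[p]) ^ (-(k : ℤ)))

lemma norm_coe_int_mul_ppow {z : ℤ} {k : ℕ}
    (h : ‖(z : ℚ_[p]) * (p : ℚ_[p]) ^ (-(k : ℤ))‖ ≤ 1) : ((p : ℤ)) ^ k ∣ z := by
  rw [norm_mul, Padic.norm_p_zpow, neg_neg] at h
  have hp1 : (0 : ℝ) < (p : ℝ) ^ (k : ℤ) :=
    zpow_pos (by exact_mod_cast hp.out.pos) _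
  have h2 : ‖(z : ℚ_[p])‖ ≤ (p : ℝ) ^ (-(k : ℤ)) := by
    rw [_root_.zpow_neg, ← one_div]
    exact (le_div_iff₀ hp1).mpr h
  exact_mod_cast (Padic.norm_int_le_pow_iff_dvd z k).mp h2

lemma pk_smul_wvec_mem (k : ℕ) (i : Fin 2) :
    ((p ^ k : ℕ) : ℤ) • wvec (p := p) k i ∈ stdLattice p := by
  intro j
  show ‖(((p ^ k : ℕ) : ℤ) • wvec (p := p) k i) j‖ ≤ 1
  rcases eq_or_ne j i with rfl | hij
  · have h1 : (((p ^ k : ℕ) : ℤ) • wvec (p := p) k j) j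
        = ((p : ℚ_[p]) ^ (k : ℤ)) * (p : ℚ_[p]) ^ (-(k : ℤ)) := by
      simp only [Pi.smul_apply, wvec, Pi.single_eq_same, zsmul_eq_mul]
      push_cast
      rw [zpow_natCast]
    rw [h1, ← zpow_add₀ (by exact_mod_cast hp.out.ne_zero : (p : ℚ_[p]) ≠ 0)]
    simp
  · have : (((p ^ k : ℕ) : ℤ) • wvec (p := p) k i) j = 0 := by
      simp [wvec, Pi.single_eq_of_ne hij]
    rw [this]
    simp

/-- The hom `ZMod p^k →+ Q` sending `1` to `p^{-k} e_i`. -/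
noncomputable def phiZM (k : ℕ) (i : Fin 2) : ZMod (p ^ k) →+ Q :=
  ZMod.lift (p ^ k) ⟨zmultiplesHom _ ((wvec (p := p) k i : Fin 2 → ℚ_[p]) : Q), by
    show ((p ^ k : ℕ) : ℤ) • ((wvec (p := p) k i : Fin 2 → ℚ_[p]) : Q) = 0
    rw [← mk_zsmul]
    rw [QuotientAddGroup.eq_zero_iff]
    exact pk_smul_wvec_mem k i⟩

lemma phiZM_intCast (k : ℕ) (i : Fin 2) (z : ℤ) :
    phiZM (p := p) k i ((z : ℤ) : ZMod (p ^ k))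
      = ((z • wvec (p := p) k i : Fin 2 → ℚ_[p]) : Q) := by
  rw [phiZM, ZMod.lift_coe]
  exact (mk_zsmul z _).symm

/-- The combined hom `ZMod p^(d 0) × ZMod p^(d 1) →+ Q`. -/
noncomputable def Phi (d : Fin 2 → ℕ) : ZMod (p ^ d 0) × ZMod (p ^ d 1) →+ Q :=
  (phiZM (d 0) 0).coprod (phiZM (d 1) 1)

lemma Phi_intCast (d : Fin 2 → ℕ) (z t : ℤ) :
    Phi (p := p) d ((z : ZMod (p ^ d 0)), (t : ZMod (p ^ d 1)))
      = ((z • wvec (p := p) (d 0) 0 + t • wvec (p := p) (d 1) 1 : Fin 2 → ℚ_[p]) : Q) := by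
  show phiZM (d 0) 0 ((z : ZMod (p ^ d 0))) + phiZM (d 1) 1 ((t : ZMod (p ^ d 1))) = _
  rw [phiZM_intCast, phiZM_intCast]
  rfl

lemma uvec_eval0 (k m : ℕ) (z t : ℤ) :
    (z • wvec (p := p) k 0 + t • wvec (p := p) m 1) 0
      = (z : ℚ_[p]) * (p : ℚ_[p]) ^ (-(k : ℤ)) := by
  simp [wvec, Pi.single_eq_of_ne (by decide : (1 : Fin 2) ≠ 0), zsmul_eq_mul]

lemma uvec_eval1 (k m : ℕ) (z t : ℤ) :
    (z • wvec (p := p) k 0 + t • wvec (p := p) m 1) 1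
      = (t : ℚ_[p]) * (p : ℚ_[p]) ^ (-(m : ℤ)) := by
  simp [wvec, Pi.single_eq_of_ne (by decide : (0 : Fin 2) ≠ 1), zsmul_eq_mul]

lemma Phi_injective (d : Fin 2 → ℕ) : Function.Injective (Phi (p := p) d) := by
  rw [injective_iff_map_eq_zero]
  rintro ⟨r, s⟩ h
  obtain ⟨z, rfl⟩ := ZMod.intCast_surjective r
  obtain ⟨t, rfl⟩ := ZMod.intCast_surjective s
  rw [Phi_intCast, QuotientAddGroup.eq_zero_iff] at h
  have h0 := h 0
  have h1 := h 1
  rw [uvec_eval0] at h0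
  rw [uvec_eval1] at h1
  have d0 := norm_coe_int_mul_ppow (p := p) h0
  have d1 := norm_coe_int_mul_ppow (p := p) h1
  have e0 : ((z : ℤ) : ZMod (p ^ d 0)) = 0 := by
    rw [ZMod.intCast_zmod_eq_zero_iff_dvd]
    exact_mod_cast d0
  have e1 : ((t : ℤ) : ZMod (p ^ d 1)) = 0 := by
    rw [ZMod.intCast_zmod_eq_zero_iff_dvd]
    exact_mod_cast d1
  rw [e0, e1]
  rfl

/-- the diagonal matrix `diag (p^(d 0), p^(d 1))`. -/
noncomputable def Dmat (d : Fin 2 → ℕ) : Mat :=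
  Matrix.diagonal (fun i => (p : ℤ_[p]) ^ (d i))

lemma matQMap_Dmat (d : Fin 2 → ℕ) (v : Fin 2 → ℚ_[p]) (i : Fin 2) :
    matQMap p (Dmat d) v i = (p : ℚ_[p]) ^ (d i) * v i := by
  fin_cases i <;>
    simp [matQMap_apply, Dmat, Matrix.diagonal_apply_eq,
      Matrix.diagonal_apply_ne, Matrix.one_apply]

lemma Phi_range (d : Fin 2 → ℕ) : (Phi (p := p) d).range = KQ (Dmat d) := by
  ext q
  constructor
  · rintro ⟨⟨r, s⟩, rfl⟩
    obtain ⟨z, rfl⟩ := ZMod.intCast_surjective r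
    obtain ⟨t, rfl⟩ := ZMod.intCast_surjective s
    rw [Phi_intCast, mk_mem_KQ]
    have hall : ∀ i : Fin 2,
        ‖matQMap p (Dmat d) (z • wvec (p := p) (d 0) 0 + t • wvec (p := p) (d 1) 1) i‖ ≤ 1 := by
      rw [Fin.forall_fin_two]
      constructor
      · rw [matQMap_Dmat, uvec_eval0, ← mul_assoc, mul_comm ((p:ℚ_[p]) ^ d 0), mul_assoc]
        have h1 : (p : ℚ_[p]) ^ (d 0) * (p : ℚ_[p]) ^ (-(d 0 : ℤ)) = 1 := by
          rw [← zpow_natCast (p : ℚ_[p]) (d 0),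
            ← zpow_add₀ (by exact_mod_cast hp.out.ne_zero : (p : ℚ_[p]) ≠ 0)]
          simp
        rw [h1, mul_one]
        exact Padic.norm_int_le_one z
      · rw [matQMap_Dmat, uvec_eval1, ← mul_assoc, mul_comm ((p:ℚ_[p]) ^ d 1), mul_assoc]
        have h1 : (p : ℚ_[p]) ^ (d 1) * (p : ℚ_[p]) ^ (-(d 1 : ℤ)) = 1 := by
          rw [← zpow_natCast (p : ℚ_[p]) (d 1),
            ← zpow_add₀ (by exact_mod_cast hp.out.ne_zero : (p : ℚ_[p]) ≠ 0)]
          simp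
        rw [h1, mul_one]
        exact Padic.norm_int_le_one t
    exact hall
  · intro hq
    revert hq
    induction q using QuotientAddGroup.induction_on with
    | H v =>
      intro hq
      rw [mk_mem_KQ] at hq
      have hmem : ∀ i, ‖(p : ℚ_[p]) ^ (d i) * v i‖ ≤ 1 := by
        intro i
        have := hq i
        rwa [show matQMap p (Dmat d) v i = (p : ℚ_[p]) ^ (d i) * v i from
          matQMap_Dmat d v i] at this
      set X : Fin 2 → ℤ_[p] := fun i => ⟨(p : ℚ_[p]) ^ (d i) * v i, hmem i⟩ with hX
      set r : Fin 2 → ℕ := fun i => (X i).appr (d i) with hr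
      have hdvd : ∀ i, ((p : ℤ_[p]) ^ (d i)) ∣ (X i - (r i : ℤ_[p])) := by
        intro i
        have := PadicInt.appr_spec (d i) (X i)
        rwa [Ideal.mem_span_singleton] at this
      refine ⟨(((r 0 : ℤ) : ZMod (p ^ d 0)), ((r 1 : ℤ) : ZMod (p ^ d 1))), ?_⟩
      have key : ∀ i : Fin 2, ‖v i - ((r i : ℕ) : ℚ_[p]) * (p : ℚ_[p]) ^ (-(d i : ℤ))‖ ≤ 1 := by
        intro i
        have hfact : v i - ((r i : ℕ) : ℚ_[p]) * (p : ℚ_[p]) ^ (-(d i : ℤ))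
            = (p : ℚ_[p]) ^ (-(d i : ℤ)) * (((X i - (r i : ℤ_[p])) : ℤ_[p]) : ℚ_[p]) := by
          push_cast
          have hcan : (p : ℚ_[p]) ^ (-(d i : ℤ)) * (p : ℚ_[p]) ^ (d i : ℕ) = 1 := by
            rw [← zpow_natCast (p : ℚ_[p]) (d i),
              ← zpow_add₀ (by exact_mod_cast hp.out.ne_zero : (p : ℚ_[p]) ≠ 0)]
            simp
          rw [mul_sub, ← mul_assoc, hcan, one_mul, mul_comm ((p : ℚ_[p]) ^ (-(d i : ℤ)))]
        rw [hfact, norm_mul, Padic.norm_p_zpow, neg_neg]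
        have hnx : ‖(((X i - (r i : ℤ_[p])) : ℤ_[p]) : ℚ_[p])‖ ≤ (p : ℝ) ^ (-(d i : ℤ)) := by
          rw [PadicInt.padic_norm_e_of_padicInt]
          exact (PadicInt.norm_le_pow_iff_mem_span_pow _ (d i)).mpr
            (Ideal.mem_span_singleton.mpr (hdvd i))
        calc (p : ℝ) ^ (d i : ℤ) * ‖(((X i - (r i : ℤ_[p])) : ℤ_[p]) : ℚ_[p])‖
            ≤ (p : ℝ) ^ (d i : ℤ) * (p : ℝ) ^ (-(d i : ℤ)) := by
              apply mul_le_mul_of_nonneg_left hnx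
              positivity
          _ = 1 := by
              rw [← zpow_add₀ (by exact_mod_cast hp.out.pos.ne' : (p : ℝ) ≠ 0)]
              simp
      rw [Phi_intCast, QuotientAddGroup.eq]
      have hsub : -(((r 0 : ℕ) : ℤ) • wvec (p := p) (d 0) 0 + ((r 1 : ℕ) : ℤ) • wvec (p := p) (d 1) 1) + v
          = v - (((r 0 : ℕ) : ℤ) • wvec (p := p) (d 0) 0 + ((r 1 : ℕ) : ℤ) • wvec (p := p) (d 1) 1) := by
        abel
      rw [hsub]
      have hall : ∀ j : Fin 2, ‖(v - (((r 0 : ℕ) : ℤ) • wvec (p := p) (d 0) 0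
          + ((r 1 : ℕ) : ℤ) • wvec (p := p) (d 1) 1)) j‖ ≤ 1 := by
        rw [Fin.forall_fin_two]
        constructor
        · rw [Pi.sub_apply, uvec_eval0]
          exact_mod_cast key 0
        · rw [Pi.sub_apply, uvec_eval1]
          exact_mod_cast key 1
      exact hall

/-- The equivalence `ZMod p^(d 0) × ZMod p^(d 1) ≃+ KQ (Dmat d)`. -/
noncomputable def PhiEquiv (d : Fin 2 → ℕ) :
    (ZMod (p ^ d 0) × ZMod (p ^ d 1)) ≃+ KQ (Dmat (p := p) d) :=
  (AddMonoidHom.ofInjective (Phi_injective (p := p) d)).trans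
    (AddEquiv.addSubgroupCongr (Phi_range d))

end Work2
section Work3

variable {p : ℕ} [hp : Fact p.Prime]

local notation "R" => ℤ_[p]
local notation "Mat" => Matrix (Fin 2) (Fin 2) ℤ_[p]
local notation "Q" => (Fin 2 → ℚ_[p]) ⧸ stdLattice p

lemma p_ne_zero' : ((p : ℤ_[p])) ≠ 0 := by
  exact_mod_cast Nat.cast_ne_zero.mpr hp.out.ne_zero

lemma isUnit_of_not_dvd {x : ℤ_[p]} (h : ¬ ((p : ℤ_[p]) ∣ x)) : IsUnit x := by
  rw [PadicInt.isUnit_iff]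
  refine le_antisymm (PadicInt.norm_le_one x) (not_lt.mp fun hlt => h ?_)
  exact PadicInt.norm_lt_one_iff_dvd x |>.mp hlt

lemma valEq_neg {x : ℤ_[p]} {k : ℕ} (h : valEq x k) : valEq (-x) k :=
  ⟨dvd_neg.mpr h.1, fun h' => h.2 (dvd_neg.mp h')⟩

lemma valEq_unit_mul {u x : ℤ_[p]} {k : ℕ} (hu : IsUnit u) (h : valEq (u * x) k) :
    valEq x k := by
  obtain ⟨w, rfl⟩ := hu
  exact ⟨(Units.dvd_mul_left).mp h.1, fun h' => h.2 ((Units.dvd_mul_left).mpr h')⟩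

lemma pivot (b : ℕ) (m : Mat) (hunit : IsUnit (m 0 0)) (hdet : valEq m.det b) :
    ∃ U V : Mat, IsUnit U.det ∧ IsUnit V.det ∧
      m = U * Matrix.diagonal ![1, (p : ℤ_[p]) ^ b] * V := by
  obtain ⟨u, hu⟩ := hunit
  set iu : ℤ_[p] := ((u⁻¹ : ℤ_[p]ˣ) : ℤ_[p]) with hiu
  have hui : m 0 0 * iu = 1 := by rw [← hu, hiu]; exact_mod_cast u.mul_inv
  set e : ℤ_[p] := m 1 1 - m 1 0 * iu * m 0 1 with he
  have key : !![(1 : ℤ_[p]), 0; m 1 0 * iu, 1] * !![m 0 0, 0; 0, e]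
      * !![(1 : ℤ_[p]), iu * m 0 1; 0, 1] = m := by
    ext i j
    fin_cases i <;> fin_cases j <;>
      simp [Matrix.mul_apply, Fin.sum_univ_two, he]
    · linear_combination (m 0 1) * hui
    · linear_combination (m 1 0) * hui
    · linear_combination (m 1 0 * iu * m 0 1) * hui
  have hdetm : m.det = m 0 0 * e := by
    rw [Matrix.det_fin_two, he]
    linear_combination (m 0 1 * m 1 0) * hui
  have hve : valEq e b := valEq_unit_mul (show IsUnit (m 0 0) from ⟨u, hu⟩) (hdetm ▸ hdet)
  obtain ⟨e', he'⟩ := hve.1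
  have hue' : IsUnit e' := by
    apply isUnit_of_not_dvd
    intro ⟨c, hc⟩
    exact hve.2 ⟨c, by rw [he', hc]; ring⟩
  have hX : !![m 0 0, 0; 0, e] = !![m 0 0, 0; 0, e'] * Matrix.diagonal ![1, (p : ℤ_[p]) ^ b] := by
    ext i j
    rw [Matrix.mul_diagonal]
    fin_cases i <;> fin_cases j <;> simp [he'] <;> ring
  refine ⟨!![(1 : ℤ_[p]), 0; m 1 0 * iu, 1] * !![m 0 0, 0; 0, e'],
    !![(1 : ℤ_[p]), iu * m 0 1; 0, 1], ?_, ?_, ?_⟩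
  · rw [Matrix.det_mul, Matrix.det_fin_two_of, Matrix.det_fin_two_of]
    have h1 : ((1 : ℤ_[p]) * 1 - 0 * (m 1 0 * iu)) * (m 0 0 * e' - 0 * 0) = m 0 0 * e' := by
      ring
    rw [h1]
    exact IsUnit.mul (⟨u, hu⟩ : IsUnit (m 0 0)) hue'
  · rw [Matrix.det_fin_two_of]
    simp
  · conv_lhs => rw [← key]
    rw [hX, ← mul_assoc]
lemma swap_mul_swap : (!![(0 : ℤ_[p]), 1; 1, 0] : Mat) * !![(0 : ℤ_[p]), 1; 1, 0] = 1 := by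
  ext i j
  fin_cases i <;> fin_cases j <;>
    simp [Matrix.mul_apply, Fin.sum_univ_two, Matrix.one_apply]

lemma swap_det : (!![(0 : ℤ_[p]), 1; 1, 0] : Mat).det = -1 := by
  rw [Matrix.det_fin_two_of]; ring

lemma snf0 (b : ℕ) (n : Mat) (hu : ∃ i j, IsUnit (n i j)) (hdet : valEq n.det b) :
    ∃ U V : Mat, IsUnit U.det ∧ IsUnit V.det ∧
      n = U * Matrix.diagonal ![1, (p : ℤ_[p]) ^ b] * V := by
  set S : Mat := !![(0 : ℤ_[p]), 1; 1, 0] with hS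
  have hSd : S.det = -1 := swap_det
  have hSS : S * S = 1 := swap_mul_swap
  have hSunit : IsUnit S.det := by rw [hSd]; exact IsUnit.neg isUnit_one
  obtain ⟨i, j, hu⟩ := hu
  fin_cases i <;> fin_cases j
  · exact pivot b n hu hdet
  · -- unit at (0,1) : use n * S
    have h00 : (n * S) 0 0 = n 0 1 := by
      simp [hS, Matrix.mul_apply, Fin.sum_univ_two]
    have hd : (n * S).det = -n.det := by rw [Matrix.det_mul, hSd]; ring
    obtain ⟨U, V, hU, hV, heq⟩ := pivot b (n * S) (h00 ▸ hu) (hd ▸ valEq_neg hdet)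
    refine ⟨U, V * S, hU, ?_, ?_⟩
    · rw [Matrix.det_mul, hSd]
      exact IsUnit.mul hV (IsUnit.neg isUnit_one)
    · have : n = (n * S) * S := by rw [mul_assoc, hSS, mul_one]
      rw [this, heq]
      simp only [mul_assoc]
  · -- unit at (1,0) : use S * n
    have h00 : (S * n) 0 0 = n 1 0 := by
      simp [hS, Matrix.mul_apply, Fin.sum_univ_two]
    have hd : (S * n).det = -n.det := by rw [Matrix.det_mul, hSd]; ring
    obtain ⟨U, V, hU, hV, heq⟩ := pivot b (S * n) (h00 ▸ hu) (hd ▸ valEq_neg hdet)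
    refine ⟨S * U, V, ?_, hV, ?_⟩
    · rw [Matrix.det_mul, hSd]
      exact IsUnit.mul (IsUnit.neg isUnit_one) hU
    · have : n = S * (S * n) := by rw [← mul_assoc, hSS, one_mul]
      rw [this, heq]
      simp only [mul_assoc]
  · -- unit at (1,1) : use S * n * S
    have h00 : (S * n * S) 0 0 = n 1 1 := by
      simp [hS, Matrix.mul_apply, Fin.sum_univ_two, Matrix.vecMul, dotProduct,
        Matrix.vecHead, Matrix.vecTail]
    have hd : (S * n * S).det = n.det := by
      rw [Matrix.det_mul, Matrix.det_mul, hSd]; ring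
    obtain ⟨U, V, hU, hV, heq⟩ := pivot b (S * n * S) (h00 ▸ hu) (hd ▸ hdet)
    refine ⟨S * U, V * S, ?_, ?_, ?_⟩
    · rw [Matrix.det_mul, hSd]
      exact IsUnit.mul (IsUnit.neg isUnit_one) hU
    · rw [Matrix.det_mul, hSd]
      exact IsUnit.mul hV (IsUnit.neg isUnit_one)
    · have hth : n = S * (S * n * S) * S := by
        have hc : S * (S * n * S) * S = (S * S) * n * (S * S) := by
          simp only [mul_assoc]
        rw [hc, hSS, one_mul, mul_one]
      rw [hth, heq]
      simp only [mul_assoc]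
  
lemma snf (a b : ℕ) (N : Mat) (h1 : ∀ i j, (p : ℤ_[p]) ^ a ∣ N i j)
    (h2 : ¬ ∀ i j, (p : ℤ_[p]) ^ (a + 1) ∣ N i j)
    (h3 : valEq N.det (2 * a + b)) :
    ∃ U V : Mat, IsUnit U.det ∧ IsUnit V.det ∧
      N = U * Matrix.diagonal ![(p : ℤ_[p]) ^ a, (p : ℤ_[p]) ^ (a + b)] * V := by
  have hpa : ((p : ℤ_[p]) ^ a) ≠ 0 := pow_ne_zero _ p_ne_zero'
  set n : Mat := Matrix.of fun i j => (h1 i j).choose with hn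
  have hspec : ∀ i j, N i j = (p : ℤ_[p]) ^ a * n i j := fun i j => (h1 i j).choose_spec
  have hNn : N = ((p : ℤ_[p]) ^ a) • n := by
    ext i j
    rw [Matrix.smul_apply, smul_eq_mul]
    exact hspec i j
  have hdet2 : N.det = ((p : ℤ_[p]) ^ a) ^ 2 * n.det := by
    rw [hNn, Matrix.det_smul, Fintype.card_fin]
  have hpow : (p : ℤ_[p]) ^ (2 * a + b) = ((p : ℤ_[p]) ^ a) ^ 2 * (p : ℤ_[p]) ^ b := by
    ring
  have hpa2 : (((p : ℤ_[p]) ^ a) ^ 2) ≠ 0 := pow_ne_zero _ hpa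
  have hvdn : valEq n.det b := by
    constructor
    · have h := h3.1
      rw [hdet2, hpow] at h
      exact (mul_dvd_mul_iff_left hpa2).mp h
    · intro hc
      apply h3.2
      have h4 := mul_dvd_mul_left (((p : ℤ_[p]) ^ a) ^ 2) hc
      rw [← hdet2] at h4
      have h5 : (p : ℤ_[p]) ^ (2 * a + b + 1) = ((p : ℤ_[p]) ^ a) ^ 2 * (p : ℤ_[p]) ^ (b + 1) := by
        ring
      rwa [h5]
  have hunit : ∃ i j, IsUnit (n i j) := by
    push_neg at h2
    obtain ⟨i, j, hij⟩ := h2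
    refine ⟨i, j, isUnit_of_not_dvd fun ⟨c, hc⟩ => hij ⟨c, ?_⟩⟩
    rw [hspec i j, hc, pow_succ]
    ring
  obtain ⟨U, V, hU, hV, heq⟩ := snf0 b n hunit hvdn
  refine ⟨U, V, hU, hV, ?_⟩
  have hsd : ((p : ℤ_[p]) ^ a) • Matrix.diagonal ![(1 : ℤ_[p]), (p : ℤ_[p]) ^ b]
      = Matrix.diagonal ![(p : ℤ_[p]) ^ a, (p : ℤ_[p]) ^ (a + b)] := by
    ext i j
    rw [Matrix.smul_apply]
    fin_cases i <;> fin_cases j <;>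
      simp [Matrix.diagonal_apply_eq, Matrix.diagonal_apply_ne, pow_add]
  rw [hNn, heq, ← Matrix.smul_mul, ← Matrix.mul_smul, hsd]
lemma condE_nonempty_iso {a b : ℕ} {M : GL (Fin 2) ℤ_[p]} (h : CondE a b M) :
    Nonempty ((fixedPts p M) ≃+ (ZMod (p ^ a) × ZMod (p ^ (a + b)))) := by
  obtain ⟨h1, h2, h3⟩ := h
  obtain ⟨U, V, hU, hV, heq⟩ := snf a b ((M : Mat) - 1) h1 h2 h3
  have hD : Matrix.diagonal ![(p : ℤ_[p]) ^ a, (p : ℤ_[p]) ^ (a + b)] = Dmat (p := p) ![a, a + b] := by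
    unfold Dmat
    congr 1
    funext i
    fin_cases i <;> rfl
  have hstep : KQ ((M : Mat) - 1) = KQ (Dmat (p := p) ![a, a + b] * V) := by
    rw [heq, hD, mul_assoc]
    exact KQ_unit_mul hU _
  exact ⟨(AddEquiv.addSubgroupCongr ((fixedPts_eq M).trans hstep)).trans
    ((KQmulUnitEquiv hV _).trans (PhiEquiv (p := p) ![a, a + b]).symm)⟩
lemma fixedPts_infinite {M : GL (Fin 2) ℤ_[p]} (hd : ((M : Mat) - 1).det = 0) :
    Infinite (fixedPts p M) := by
  obtain ⟨v, hv0, hvN⟩ := (Matrix.exists_mulVec_eq_zero_iff (M := ((M : Mat) - 1))).mpr hd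
  obtain ⟨i, hvi0⟩ := Function.ne_iff.mp hv0
  have hvi : v i ≠ 0 := by simpa using hvi0
  have h1p : (1 : ℝ) < (p : ℝ) := by exact_mod_cast hp.out.one_lt
  have hvinorm : 0 < ‖(v i : ℚ_[p])‖ := by
    rw [PadicInt.padic_norm_e_of_padicInt]
    exact norm_pos_iff.mpr hvi
  have hpinv : ((p : ℝ)⁻¹) < 1 := inv_lt_one_of_one_lt₀ h1p
  obtain ⟨m, hm⟩ := exists_pow_lt_of_lt_one hvinorm hpinv
  set cv : Fin 2 → ℚ_[p] := fun j => (v j : ℚ_[p]) with hcv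
  have hNcv : matQMap p ((M : Mat) - 1) cv = 0 := by
    funext j
    have h := congrFun hvN j
    rw [Matrix.mulVec, dotProduct, Fin.sum_univ_two] at h
    rw [matQMap_apply]
    show _ = (0 : ℚ_[p])
    exact_mod_cast congrArg ((↑) : ℤ_[p] → ℚ_[p]) h
  set E : ℕ → Q := fun n =>
    ((((p : ℚ_[p]) ^ (-((n + m + 1 : ℕ) : ℤ))) • cv : Fin 2 → ℚ_[p]) : Q) with hE
  have hmem : ∀ n, E n ∈ fixedPts p M := by
    intro n
    rw [fixedPts_eq, hE]
    rw [mk_mem_KQ]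
    have hsm : matQMap p ((M : Mat) - 1) (((p : ℚ_[p]) ^ (-((n + m + 1 : ℕ) : ℤ))) • cv)
        = ((p : ℚ_[p]) ^ (-((n + m + 1 : ℕ) : ℤ))) • matQMap p ((M : Mat) - 1) cv :=
      map_smul (Matrix.mulVecLin ((((M : Mat) - 1)).map ((↑) : ℤ_[p] → ℚ_[p]))) _ _
    rw [hsm, hNcv, smul_zero]
    exact zero_mem _
  have hnormE : ∀ n : ℕ, ‖(p : ℚ_[p]) ^ (-((n + m + 1 : ℕ) : ℤ))‖ = (p : ℝ) ^ (n + m + 1) := by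
    intro n
    rw [Padic.norm_p_zpow, neg_neg, zpow_natCast]
  have hkey : ∀ n n' : ℕ, n < n' → E n ≠ E n' := by
    intro n n' hlt h
    rw [hE, QuotientAddGroup.eq] at h
    have h2 := h i
    have heval : (-(((p : ℚ_[p]) ^ (-((n + m + 1 : ℕ) : ℤ))) • cv)
        + ((p : ℚ_[p]) ^ (-((n' + m + 1 : ℕ) : ℤ))) • cv) i
        = ((p : ℚ_[p]) ^ (-((n' + m + 1 : ℕ) : ℤ))
            - (p : ℚ_[p]) ^ (-((n + m + 1 : ℕ) : ℤ))) * cv i := by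
      simp only [Pi.add_apply, Pi.neg_apply, Pi.smul_apply, smul_eq_mul]
      ring
    have h3 : ‖(-(((p : ℚ_[p]) ^ (-((n + m + 1 : ℕ) : ℤ))) • cv)
        + ((p : ℚ_[p]) ^ (-((n' + m + 1 : ℕ) : ℤ))) • cv) i‖ ≤ 1 := h2
    rw [heval, norm_mul] at h3
    have hne : ‖(p : ℚ_[p]) ^ (-((n' + m + 1 : ℕ) : ℤ))‖
        ≠ ‖-((p : ℚ_[p]) ^ (-((n + m + 1 : ℕ) : ℤ)))‖ := by
      rw [norm_neg, hnormE, hnormE]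
      exact ne_of_gt (by
        apply pow_lt_pow_right₀ h1p
        omega)
    have hmax : ‖(p : ℚ_[p]) ^ (-((n' + m + 1 : ℕ) : ℤ))
        - (p : ℚ_[p]) ^ (-((n + m + 1 : ℕ) : ℤ))‖ = (p : ℝ) ^ (n' + m + 1) := by
      rw [sub_eq_add_neg, Padic.add_eq_max_of_ne hne, norm_neg, hnormE, hnormE]
      apply max_eq_left
      apply le_of_lt
      apply pow_lt_pow_right₀ h1p
      omega
    rw [hmax] at h3
    have hppos : (0 : ℝ) < (p : ℝ) ^ (n' + m + 1) := by positivity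
    have hbig : (1 : ℝ) < (p : ℝ) ^ (n' + m + 1) * ‖cv i‖ := by
      have hstep : (p : ℝ) ^ (n' + m + 1) * ((p : ℝ)⁻¹) ^ m
          < (p : ℝ) ^ (n' + m + 1) * ‖cv i‖ :=
        mul_lt_mul_of_pos_left hm hppos
      have hcalc : (p : ℝ) ^ (n' + m + 1) * ((p : ℝ)⁻¹) ^ m = (p : ℝ) ^ (n' + 1) := by
        have he : (n' + m + 1) = (n' + 1) + m := by omega
        rw [he, pow_add, inv_pow, mul_assoc,
          mul_inv_cancel₀ (pow_ne_zero _ (ne_of_gt (lt_trans zero_lt_one h1p))), mul_one]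
      have hone : (1 : ℝ) < (p : ℝ) ^ (n' + 1) := one_lt_pow₀ h1p (by omega)
      rw [hcalc] at hstep
      linarith
    linarith
  have hinj : Function.Injective (fun n => (⟨E n, hmem n⟩ : fixedPts p M)) := by
    intro n n' h
    have h2 : E n = E n' := congrArg Subtype.val h
    rcases lt_trichotomy n n' with hl | hl | hl
    · exact absurd h2 (hkey _ _ hl)
    · exact hl
    · exact absurd h2.symm (hkey _ _ hl)
  exact Infinite.of_injective _ hinj
/-- An additive equivalence restricts to an equivalence of `k`-torsion subtypes. -/
def torEquiv {G H : Type*} [AddCommGroup G] [AddCommGroup H] (e : G ≃+ H) (k : ℕ) :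
    {x : G // k • x = 0} ≃ {y : H // k • y = 0} where
  toFun x := ⟨e x.1, by rw [← map_nsmul, x.2, map_zero]⟩
  invFun y := ⟨e.symm y.1, by rw [← map_nsmul, y.2, map_zero]⟩
  left_inv x := by ext; simp
  right_inv y := by ext; simp

/-- Torsion of a product splits. -/
def torProdEquiv {A B : Type*} [AddCommGroup A] [AddCommGroup B] (k : ℕ) :
    {x : A × B // k • x = 0} ≃ ({a : A // k • a = 0} × {b : B // k • b = 0}) where
  toFun x := (⟨x.1.1, congrArg Prod.fst x.2⟩, ⟨x.1.2, congrArg Prod.snd x.2⟩)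
  invFun ab := ⟨(ab.1.1, ab.2.1), by
    have h1 : k • (ab.1.1, ab.2.1) = (k • ab.1.1, k • ab.2.1) := rfl
    rw [h1, ab.1.2, ab.2.2]
    rfl⟩
  left_inv x := by ext <;> rfl
  right_inv ab := by ext <;> rfl

lemma card_tor_zmod (α k : ℕ) :
    Nat.card {x : ZMod (p ^ α) // (p ^ k) • x = 0} = p ^ (min α k) := by
  haveI : NeZero (p ^ α) := ⟨pow_ne_zero _ hp.out.ne_zero⟩
  haveI : NeZero (p ^ (min α k)) := ⟨pow_ne_zero _ hp.out.ne_zero⟩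
  set m := min α k with hm
  have hmα : m ≤ α := min_le_left _ _
  have hmk : m ≤ k := min_le_right _ _
  have hppos : 0 < p := hp.out.pos
  have hsplit : p ^ α = p ^ (α - m) * p ^ m := by
    rw [← pow_add]
    congr 1
    omega
  have hg : ∀ t : ZMod (p ^ m), (p ^ k) • (((t.val * p ^ (α - m) : ℕ) : ZMod (p ^ α))) = 0 := by
    intro t
    rw [nsmul_eq_mul, ← Nat.cast_mul, ZMod.natCast_eq_zero_iff]
    have hd : p ^ α ∣ p ^ (k + (α - m)) := pow_dvd_pow _ (by omega)
    refine dvd_trans hd ⟨t.val, by rw [pow_add]; ring⟩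
  set g : ZMod (p ^ m) → {x : ZMod (p ^ α) // (p ^ k) • x = 0} :=
    fun t => ⟨_, hg t⟩ with hgdef
  have hlt : ∀ t : ZMod (p ^ m), t.val * p ^ (α - m) < p ^ α := by
    intro t
    calc t.val * p ^ (α - m) < p ^ m * p ^ (α - m) :=
          (Nat.mul_lt_mul_right (Nat.pow_pos hppos)).mpr (ZMod.val_lt t)
      _ = p ^ α := by rw [← pow_add]; congr 1; omega
  have hbij : Function.Bijective g := by
    constructor
    · intro t t' h
      have hv := congrArg (fun x : {x : ZMod (p ^ α) // (p ^ k) • x = 0} => (x.1).val) h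
      simp only [hgdef] at hv
      rw [ZMod.val_cast_of_lt (hlt t), ZMod.val_cast_of_lt (hlt t')] at hv
      have := Nat.eq_of_mul_eq_mul_right (Nat.pow_pos hppos) hv
      exact ZMod.val_injective _ this
    · rintro ⟨y, hy⟩
      have hy2 : p ^ α ∣ p ^ k * y.val := by
        rw [nsmul_eq_mul] at hy
        have : ((p ^ k * y.val : ℕ) : ZMod (p ^ α)) = 0 := by
          push_cast
          rw [ZMod.natCast_rightInverse y]
          exact_mod_cast hy
        exact (ZMod.natCast_eq_zero_iff _ _).mp this
      have hdvd : p ^ (α - m) ∣ y.val := by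
        rcases le_or_gt α k with hαk | hkα
        · have h1 : p ^ (α - m) = 1 := by rw [show α - m = 0 by omega, pow_zero]
          rw [h1]
          exact one_dvd _
        · have hsp : p ^ k * p ^ (α - k) = p ^ α := by rw [← pow_add]; congr 1; omega
          have hy3 : p ^ k * p ^ (α - k) ∣ p ^ k * y.val := dvd_trans hsp.dvd hy2
          have h7 := (Nat.mul_dvd_mul_iff_left (Nat.pow_pos hppos)).mp hy3
          exact dvd_trans (pow_dvd_pow p (by omega : α - m ≤ α - k)) h7
      obtain ⟨t, ht⟩ := hdvd
      have htlt : t < p ^ m := by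
        by_contra hge
        push_neg at hge
        have hle : p ^ α ≤ y.val := by
          rw [ht, hsplit]
          exact Nat.mul_le_mul (le_refl (p ^ (α - m))) hge
        exact absurd (ZMod.val_lt y) (not_lt.mpr hle)
      refine ⟨((t : ℕ) : ZMod (p ^ m)), ?_⟩
      apply Subtype.ext
      show (((((t : ℕ) : ZMod (p ^ m))).val * p ^ (α - m) : ℕ) : ZMod (p ^ α)) = y
      rw [ZMod.val_cast_of_lt htlt]
      rw [show t * p ^ (α - m) = y.val by rw [ht]; ring]
      exact ZMod.natCast_rightInverse y
  calc Nat.card {x : ZMod (p ^ α) // (p ^ k) • x = 0}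
      = Nat.card (ZMod (p ^ m)) := (Nat.card_eq_of_bijective g hbij).symm
    _ = p ^ m := Nat.card_zmod _

lemma zmod_prod_classify {α β γ δ : ℕ} (hab : α ≤ β) (hcd : γ ≤ δ)
    (e : (ZMod (p ^ α) × ZMod (p ^ β)) ≃+ (ZMod (p ^ γ) × ZMod (p ^ δ))) :
    α = γ ∧ β = δ := by
  have key : ∀ k, min α k + min β k = min γ k + min δ k := by
    intro k
    have h1 : Nat.card {x : ZMod (p ^ α) × ZMod (p ^ β) // (p ^ k) • x = 0}
        = p ^ (min α k + min β k) := by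
      rw [Nat.card_congr (torProdEquiv (p ^ k)), Nat.card_prod, card_tor_zmod, card_tor_zmod,
        ← pow_add]
    have h2 : Nat.card {x : ZMod (p ^ α) × ZMod (p ^ β) // (p ^ k) • x = 0}
        = p ^ (min γ k + min δ k) := by
      rw [Nat.card_congr (torEquiv e (p ^ k)), Nat.card_congr (torProdEquiv (p ^ k)),
        Nat.card_prod, card_tor_zmod, card_tor_zmod, ← pow_add]
    exact Nat.pow_right_injective hp.out.two_le (h1.symm.trans h2)
  have k1 := key γ
  have k2 := key α
  have k3 := key (max β δ)
  constructor <;> omega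
lemma exists_not_dvd_pow {x : ℤ_[p]} (hx : x ≠ 0) : ∃ k : ℕ, ¬ ((p : ℤ_[p]) ^ k ∣ x) := by
  have h1p : (1 : ℝ) < (p : ℝ) := by exact_mod_cast hp.out.one_lt
  have hpinv : ((p : ℝ)⁻¹) < 1 := inv_lt_one_of_one_lt₀ h1p
  obtain ⟨m, hm⟩ := exists_pow_lt_of_lt_one (norm_pos_iff.mpr hx) hpinv
  refine ⟨m, fun hdvd => ?_⟩
  have hle := (PadicInt.norm_le_pow_iff_mem_span_pow x m).mpr (Ideal.mem_span_singleton.mpr hdvd)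
  have heq : ((p : ℝ)) ^ (-(m : ℤ)) = ((p : ℝ)⁻¹) ^ m := by
    rw [_root_.zpow_neg, zpow_natCast, inv_pow]
  rw [heq] at hle
  linarith

lemma valEq_exists {x : ℤ_[p]} (hx : x ≠ 0) : ∃ c, valEq x c := by
  classical
  have h := exists_not_dvd_pow hx
  have hk0pos : Nat.find h ≠ 0 := fun h0 =>
    Nat.find_spec h (by rw [h0, pow_zero]; exact one_dvd _)
  refine ⟨Nat.find h - 1, ?_, ?_⟩
  · exact not_not.mp (Nat.find_min h (by omega))
  · rw [show Nat.find h - 1 + 1 = Nat.find h by omega]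
    exact Nat.find_spec h

lemma dvd_det_of_dvd {t : ℕ} {N : Mat} (h : ∀ i j, (p : ℤ_[p]) ^ t ∣ N i j) :
    (p : ℤ_[p]) ^ (2 * t) ∣ N.det := by
  rw [Matrix.det_fin_two, two_mul, pow_add]
  exact dvd_sub (mul_dvd_mul (h 0 0) (h 1 1)) (mul_dvd_mul (h 0 1) (h 1 0))

theorem fixed_points_group_structure'
    (a b : ℕ) (M : GL (Fin 2) ℤ_[p]) :
    Nonempty (fixedPts p M ≃+ (ZMod (p ^ a) × ZMod (p ^ (a + b)))) ↔ CondE a b M := by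
  classical
  constructor
  · rintro ⟨e⟩
    by_cases hd : (((M : Matrix (Fin 2) (Fin 2) ℤ_[p])) - 1).det = 0
    · exfalso
      haveI hinf := fixedPts_infinite hd
      haveI : NeZero (p ^ a) := ⟨pow_ne_zero _ hp.out.ne_zero⟩
      haveI : NeZero (p ^ (a + b)) := ⟨pow_ne_zero _ hp.out.ne_zero⟩
      haveI hfin : Finite (fixedPts p M) := Finite.of_equiv _ e.symm.toEquiv
      exact not_finite (fixedPts p M)
    · obtain ⟨c, hc⟩ := valEq_exists (p := p) hd
      have hfind : ∃ k : ℕ, ¬ ∀ i j,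
          (p : ℤ_[p]) ^ k ∣ ((M : Matrix (Fin 2) (Fin 2) ℤ_[p]) - 1) i j := by
        refine ⟨c + 1, fun hall => hc.2 ?_⟩
        exact dvd_trans (pow_dvd_pow _ (by omega : c + 1 ≤ 2 * (c + 1))) (dvd_det_of_dvd hall)
      have hk0pos : Nat.find hfind ≠ 0 := fun h0 =>
        Nat.find_spec hfind (fun i j => by rw [h0, pow_zero]; exact one_dvd _)
      set a' := Nat.find hfind - 1 with ha'
      have h1' : ∀ i j, (p : ℤ_[p]) ^ a' ∣ ((M : Matrix (Fin 2) (Fin 2) ℤ_[p]) - 1) i j :=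
        not_not.mp (Nat.find_min hfind (by omega))
      have h2' : ¬ ∀ i j,
          (p : ℤ_[p]) ^ (a' + 1) ∣ ((M : Matrix (Fin 2) (Fin 2) ℤ_[p]) - 1) i j := by
        rw [show a' + 1 = Nat.find hfind by omega]
        exact Nat.find_spec hfind
      have h2a : 2 * a' ≤ c := by
        by_contra hlt
        push_neg at hlt
        exact hc.2 (dvd_trans (pow_dvd_pow _ (by omega : c + 1 ≤ 2 * a'))
          (dvd_det_of_dvd h1'))
      have hcond : CondE a' (c - 2 * a') M := by
        refine ⟨h1', h2', ?_⟩
        rw [show 2 * a' + (c - 2 * a') = c by omega]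
        exact hc
      obtain ⟨e'⟩ := condE_nonempty_iso hcond
      have hcl := zmod_prod_classify (by omega : a ≤ a + b)
        (by omega : a' ≤ a' + (c - 2 * a')) (e.symm.trans e')
      have haa : a = a' := hcl.1
      have hbb : b = c - 2 * a' := by omega
      rw [haa, hbb]
      exact hcond
  · intro h
    exact condE_nonempty_iso h

end Work3

/-- the fixed points of `M` on `ℚ_ℓ²/ℤ_ℓ²` form a group isomorphic to
`ℤ/ℓ^a × ℤ/ℓ^{a+b}` if and only if condition `E(a,b)` holds. -/
theorem fixed_points_group_structure
    (p : ℕ) [Fact p.Prime] (a b : ℕ) (M : GL (Fin 2) ℤ_[p]) :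
    Nonempty (fixedPts p M ≃+ (ZMod (p ^ a) × ZMod (p ^ (a + b)))) ↔ CondE a b M :=
  fixed_points_group_structure' a b M
end
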